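/- arXiv:2412.03245 — 3 statements merged into one kernel-verified Lean document; each statement's English description precedes it below -/
import Mathlib

section
/- Fix ψ ∈ A(𝔻) not identically zero. A map T : ψA(𝔻) → ψA(𝔻) is an algebra automorphism (bijective, ℂ-linear and multiplicative) if and only if there exist φ ∈ Aut(𝔻) and an invertible element g of A(𝔻) (g ∈ A(𝔻) with g·h ≡ 1 on the closed unit disc for some h ∈ A(𝔻)) such that ψ ∘ φ̂ = ψ·g and T f = f ∘ φ̂ for all f ∈ ψA(𝔻), where φ̂ is the continuous extension of φ to the closed unit disc. -/
open Complex Metric Set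

local notation "𝔻" => Complex.UnitDisc

/-- The closed unit disc, as a subset of `ℂ`. -/
def cD : Set ℂ := Metric.closedBall 0 1

/-- A function on the open unit disc is analytic (holomorphic):
it is the restriction of a function differentiable on the open unit ball. -/
def HolOn (f : 𝔻 → ℂ) : Prop :=
  ∃ F : ℂ → ℂ, DifferentiableOn ℂ F (Metric.ball 0 1) ∧ ∀ z : 𝔻, F ↑z = f z

/-- Membership in `H^∞`, the algebra of bounded analytic functions on the unit disc. -/
def MemHinf (f : 𝔻 → ℂ) : Prop :=
  HolOn f ∧ ∃ M : ℝ, ∀ z : 𝔻, ‖f z‖ ≤ M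

/-- Membership in the disc algebra `A(𝔻)`: continuous on the closed unit disc,
analytic in its interior. -/
def MemDiscAlg (f : ↥cD → ℂ) : Prop :=
  ∃ F : ℂ → ℂ, ContinuousOn F cD ∧ DifferentiableOn ℂ F (Metric.ball 0 1) ∧
    ∀ z : ↥cD, F ↑z = f z

/-- `φ ∈ Aut(𝔻)`: a bijective analytic self-map of the unit disc. -/
def IsDiscAut (φ : 𝔻 → 𝔻) : Prop :=
  (∃ F : ℂ → ℂ, DifferentiableOn ℂ F (Metric.ball 0 1) ∧ ∀ z : 𝔻, F ↑z = ↑(φ z)) ∧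
  Function.Bijective φ

/-- A Möbius automorphism of the unit disc, given by its global formula
`Φ z = η (a - z) / (1 - conj a * z)` with `|a| < 1`, `|η| = 1`; this is the analytic
extension to (a neighbourhood of) the closed unit disc of a disc automorphism. -/
def IsMobius (Φ : ℂ → ℂ) : Prop :=
  ∃ a η : ℂ, ‖a‖ < 1 ∧ ‖η‖ = 1 ∧
    ∀ z : ℂ, Φ z = η * (a - z) / (1 - (starRingEnd ℂ) a * z)

/-- `T` is an algebra automorphism of the set `A` of complex-valued functions:
a bijective, `ℂ`-linear and multiplicative self-map of `A`. -/
def IsAlgAutOn {ι : Type} (A : Set (ι → ℂ)) (T : (ι → ℂ) → (ι → ℂ)) : Prop :=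
  (∀ f ∈ A, T f ∈ A) ∧
  (∀ f ∈ A, ∀ g ∈ A, T (f + g) = T f + T g) ∧
  (∀ (c : ℂ), ∀ f ∈ A, T (c • f) = c • T f) ∧
  (∀ f ∈ A, ∀ g ∈ A, T (f * g) = T f * T g) ∧
  Set.InjOn T A ∧ Set.SurjOn T A A

/-- The subalgebra `ψ H^∞ = {ψ · g : g ∈ H^∞}`. -/
def psiH (ψ : 𝔻 → ℂ) : Set (𝔻 → ℂ) :=
  {f | ∃ g, MemHinf g ∧ f = fun z => ψ z * g z}

/-- The subalgebra `ψ A(𝔻) = {ψ · g : g ∈ A(𝔻)}`. -/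
def psiA (ψ : ↥cD → ℂ) : Set (↥cD → ℂ) :=
  {f | ∃ g, MemDiscAlg g ∧ f = fun z => ψ z * g z}

/-- The composition operator `C_φ : f ↦ f ∘ φ` is a well-defined algebra automorphism
of the set `A` (it is automatically linear and multiplicative). -/
def CompAutOn (A : Set (𝔻 → ℂ)) (φ : 𝔻 → 𝔻) : Prop :=
  (∀ f ∈ A, f ∘ φ ∈ A) ∧ Set.InjOn (fun f => f ∘ φ) A ∧ Set.SurjOn (fun f => f ∘ φ) A A

/-- The Möbius factor `τ_a(z) = (a - z)/(1 - conj a · z)`. -/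
noncomputable def mobius (a z : ℂ) : ℂ := (a - z) / (1 - (starRingEnd ℂ) a * z)

/-- `f` has a zero of order (multiplicity) `k` at `w`:
`f z = (z - w)^k g z` with `g` analytic and `g w ≠ 0`. -/
def ZeroOrderAt (f : 𝔻 → ℂ) (w : 𝔻) (k : ℕ) : Prop :=
  ∃ g : 𝔻 → ℂ, HolOn g ∧ g w ≠ 0 ∧ ∀ z : 𝔻, f z = ((z : ℂ) - (w : ℂ)) ^ k * g z

/-- `g` is an invertible element of `H^∞`. -/
def InvHinf (g : 𝔻 → ℂ) : Prop :=
  MemHinf g ∧ ∃ h : 𝔻 → ℂ, MemHinf h ∧ ∀ z, g z * h z = 1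

/-- `g` is an invertible element of the disc algebra `A(𝔻)`. -/
def InvDiscAlg (g : ↥cD → ℂ) : Prop :=
  MemDiscAlg g ∧ ∃ h : ↥cD → ℂ, MemDiscAlg h ∧ ∀ z, g z * h z = 1

section Proofs
open Complex Metric Set Topology

noncomputable def Complex.abs : AbsoluteValue ℂ ℝ :=
  IsAbsoluteValue.toAbsoluteValue (norm : ℂ → ℝ)

lemma Complex.abs_def' (z : ℂ) : Complex.abs z = ‖z‖ := rfl

@[simp] lemma Complex.norm_eq_abs (z : ℂ) : ‖z‖ = Complex.abs z := rfl

lemma Complex.abs_apply (z : ℂ) : Complex.abs z = Real.sqrt (Complex.normSq z) := by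
  rw [Complex.abs_def', Complex.norm_def]

@[simp] lemma Complex.abs_conj (z : ℂ) : Complex.abs ((starRingEnd ℂ) z) = Complex.abs z :=
  Complex.norm_conj z

@[simp] lemma Complex.abs_ofReal (r : ℝ) : Complex.abs (r : ℂ) = |r| := by
  rw [Complex.abs_def', Complex.norm_real, Real.norm_eq_abs]

lemma Complex.sq_abs (z : ℂ) : Complex.abs z ^ 2 = Complex.normSq z := Complex.sq_norm z

lemma Complex.normSq_eq_abs (z : ℂ) : Complex.normSq z = Complex.abs z ^ 2 :=
  Complex.normSq_eq_norm_sq z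

lemma Complex.continuous_abs : Continuous Complex.abs := continuous_norm

lemma Complex.abs_le_abs_of_mapsTo_ball_self {f : ℂ → ℂ} {R : ℝ} {z : ℂ}
    (hd : DifferentiableOn ℂ f (ball 0 R)) (h_maps : MapsTo f (ball 0 R) (ball 0 R))
    (h₀ : f 0 = 0) (hz : Complex.abs z < R) : Complex.abs (f z) ≤ Complex.abs z :=
  Complex.norm_le_norm_of_mapsTo_ball hd (fun _ hu => ball_subset_closedBall (h_maps hu)) h₀ hz

lemma mem_cD_iff {z : ℂ} : z ∈ cD ↔ Complex.abs z ≤ 1 := by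
  simp [cD, Metric.mem_closedBall, Complex.dist_eq]

lemma ball_subset_cD : Metric.ball (0:ℂ) 1 ⊆ cD := Metric.ball_subset_closedBall

lemma memDA_const (c : ℂ) : MemDiscAlg (fun _ => c) :=
  ⟨fun _ => c, continuousOn_const, differentiableOn_const c, fun _ => rfl⟩

lemma memDA_one : MemDiscAlg (fun _ => (1:ℂ)) := memDA_const 1

lemma memDA_id : MemDiscAlg (fun z : ↥cD => (z:ℂ)) :=
  ⟨id, continuousOn_id, differentiableOn_id, fun _ => rfl⟩

lemma MemDiscAlg.add {f g : ↥cD → ℂ} (hf : MemDiscAlg f) (hg : MemDiscAlg g) :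
    MemDiscAlg (fun z => f z + g z) := by
  obtain ⟨F, hFc, hFd, hF⟩ := hf; obtain ⟨G, hGc, hGd, hG⟩ := hg
  exact ⟨F + G, hFc.add hGc, hFd.add hGd, fun z => by simp [hF z, hG z]⟩

lemma MemDiscAlg.mul {f g : ↥cD → ℂ} (hf : MemDiscAlg f) (hg : MemDiscAlg g) :
    MemDiscAlg (fun z => f z * g z) := by
  obtain ⟨F, hFc, hFd, hF⟩ := hf; obtain ⟨G, hGc, hGd, hG⟩ := hg
  exact ⟨F * G, hFc.mul hGc, hFd.mul hGd, fun z => by simp [hF z, hG z]⟩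

lemma MemDiscAlg.smul {f : ↥cD → ℂ} (c : ℂ) (hf : MemDiscAlg f) :
    MemDiscAlg (fun z => c * f z) := (memDA_const c).mul hf

lemma memDA_pow (n : ℕ) : MemDiscAlg (fun z : ↥cD => (z:ℂ)^n) := by
  induction n with
  | zero => simpa using memDA_one
  | succ n ih => simpa [pow_succ] using ih.mul memDA_id

lemma coe_abs_le (z : ↥cD) : Complex.abs (z : ℂ) ≤ 1 := mem_cD_iff.mp z.2

lemma memDA_polyfun (N : ℕ) (c : ℕ → ℂ) :
    MemDiscAlg (fun z : ↥cD => ∑ k ∈ Finset.range N, c k * (z:ℂ)^k) := by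
  refine ⟨fun x => ∑ k ∈ Finset.range N, c k * x^k, ?_, ?_, fun z => rfl⟩
  · exact continuousOn_finset_sum _ fun k _ => (continuousOn_const.mul (continuousOn_pow k))
  · exact DifferentiableOn.fun_sum fun k _ =>
      (differentiableOn_const _).mul (differentiable_pow k).differentiableOn


lemma eqOn_cD_ext {F G : ℂ → ℂ} (hFc : ContinuousOn F cD) (hFd : DifferentiableOn ℂ F (ball 0 1))
    (hGc : ContinuousOn G cD) (hGd : DifferentiableOn ℂ G (ball 0 1))
    {S : Set ℂ} {z₀ : ℂ} (hz₀ : z₀ ∈ ball (0:ℂ) 1) (hnh : S ∈ 𝓝 z₀)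
    (h : Set.EqOn F G S) : Set.EqOn F G cD := by
  have hball : Set.EqOn F G (ball 0 1) := by
    have hFa : AnalyticOnNhd ℂ F (ball 0 1) := hFd.analyticOnNhd isOpen_ball
    have hGa : AnalyticOnNhd ℂ G (ball 0 1) := hGd.analyticOnNhd isOpen_ball
    refine hFa.eqOn_of_preconnected_of_frequently_eq hGa (convex_ball _ _).isPreconnected hz₀ ?_
    have : ∀ᶠ z in 𝓝[≠] z₀, F z = G z := by
      filter_upwards [nhdsWithin_le_nhds hnh] with z hz using h hz
    exact this.frequently
  intro z hz
  have hzc : z ∈ closure (ball (0:ℂ) 1) := by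
    rw [closure_ball (0:ℂ) one_ne_zero]; exact hz
  have hne : (𝓝[ball (0:ℂ) 1] z).NeBot := mem_closure_iff_nhdsWithin_neBot.mp hzc
  have hF : Filter.Tendsto F (𝓝[ball (0:ℂ) 1] z) (𝓝 (F z)) :=
    ((hFc z hz).mono Metric.ball_subset_closedBall).tendsto
  have hG : Filter.Tendsto G (𝓝[ball (0:ℂ) 1] z) (𝓝 (G z)) :=
    ((hGc z hz).mono Metric.ball_subset_closedBall).tendsto
  have : Filter.Tendsto F (𝓝[ball (0:ℂ) 1] z) (𝓝 (G z)) := by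
    refine hG.congr' ?_
    filter_upwards [self_mem_nhdsWithin] with w hw using (hball hw).symm
  exact tendsto_nhds_unique hF this

lemma mobius_den_ne {a z : ℂ} (ha : Complex.abs a < 1) (hz : Complex.abs z ≤ 1) :
    1 - (starRingEnd ℂ) a * z ≠ 0 := by
  intro h
  have h2 : Complex.abs ((starRingEnd ℂ) a * z) < 1 := by
    rw [map_mul, Complex.abs_conj]
    calc Complex.abs a * Complex.abs z ≤ Complex.abs a * 1 :=
      mul_le_mul_of_nonneg_left hz (Complex.abs.nonneg a)
    _ < 1 := by simpa using ha
  rw [sub_eq_zero] at h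
  rw [← h] at h2; simp at h2

lemma mobius_normSq_identity (a z : ℂ) :
    Complex.normSq (1 - (starRingEnd ℂ) a * z) - Complex.normSq (a - z)
      = (1 - Complex.normSq a) * (1 - Complex.normSq z) := by
  simp only [Complex.normSq_apply, Complex.sub_re, Complex.sub_im, Complex.mul_re,
    Complex.mul_im, Complex.conj_re, Complex.conj_im, Complex.one_re, Complex.one_im]
  ring

lemma normSq_le_one_iff {z : ℂ} : Complex.normSq z ≤ 1 ↔ Complex.abs z ≤ 1 := by
  rw [← Complex.sq_abs]
  constructor
  · intro h; nlinarith [Complex.abs.nonneg z]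
  · intro h; nlinarith [Complex.abs.nonneg z]

lemma normSq_lt_one_iff {z : ℂ} : Complex.normSq z < 1 ↔ Complex.abs z < 1 := by
  rw [← Complex.sq_abs]
  constructor
  · intro h; nlinarith [Complex.abs.nonneg z]
  · intro h; nlinarith [Complex.abs.nonneg z]

lemma mobius_abs_le {a z : ℂ} (ha : Complex.abs a < 1) (hz : Complex.abs z ≤ 1) :
    Complex.abs (mobius a z) ≤ 1 := by
  have hden := mobius_den_ne ha hz
  rw [mobius, map_div₀, div_le_one (by
    have := Complex.abs.pos hden; exact this)]
  have key := mobius_normSq_identity a z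
  have h1 : 0 ≤ (1 - Complex.normSq a) * (1 - Complex.normSq z) := by
    apply mul_nonneg
    · have := normSq_lt_one_iff.mpr ha; linarith
    · have := normSq_le_one_iff.mpr hz; linarith
  have h2 : Complex.normSq (a - z) ≤ Complex.normSq (1 - (starRingEnd ℂ) a * z) := by linarith
  rw [Complex.abs_apply, Complex.abs_apply]
  exact Real.sqrt_le_sqrt h2

lemma mobius_abs_lt {a z : ℂ} (ha : Complex.abs a < 1) (hz : Complex.abs z < 1) :
    Complex.abs (mobius a z) < 1 := by
  have hden := mobius_den_ne ha hz.le
  rw [mobius, map_div₀, div_lt_one (Complex.abs.pos hden)]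
  have key := mobius_normSq_identity a z
  have h1 : 0 < (1 - Complex.normSq a) * (1 - Complex.normSq z) := by
    apply mul_pos
    · have := normSq_lt_one_iff.mpr ha; linarith
    · have := normSq_lt_one_iff.mpr hz; linarith
  have h2 : Complex.normSq (a - z) < Complex.normSq (1 - (starRingEnd ℂ) a * z) := by linarith
  rw [Complex.abs_apply, Complex.abs_apply]
  exact Real.sqrt_lt_sqrt (Complex.normSq_nonneg _) h2

lemma mobius_mobius {a z : ℂ} (ha : Complex.abs a < 1) (hz : Complex.abs z ≤ 1) :
    mobius a (mobius a z) = z := by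
  have h1 := mobius_den_ne ha hz
  have h2 := mobius_den_ne ha (mobius_abs_le ha hz)
  have ha2 : 1 - (starRingEnd ℂ) a * a ≠ 0 := by
    have : Complex.abs ((starRingEnd ℂ) a * a) < 1 := by
      rw [map_mul, Complex.abs_conj]; nlinarith [Complex.abs.nonneg a]
    intro h; rw [sub_eq_zero] at h; rw [← h] at this; simp at this
  rw [mobius] at h2
  rw [mobius, mobius, div_eq_iff h2]
  linear_combination (z - a) * mul_inv_cancel₀ h1

lemma mobius_differentiableAt {a z : ℂ} (h : 1 - (starRingEnd ℂ) a * z ≠ 0) :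
    DifferentiableAt ℂ (mobius a) z := by
  apply DifferentiableAt.div
  · exact (differentiableAt_const a).sub differentiableAt_id
  · exact (differentiableAt_const 1).sub ((differentiableAt_const _).mul differentiableAt_id)
  · exact h

lemma mobius_continuousAt {a z : ℂ} (h : 1 - (starRingEnd ℂ) a * z ≠ 0) :
    ContinuousAt (mobius a) z := (mobius_differentiableAt h).continuousAt

lemma poly_approx {F : ℂ → ℂ} (hFc : ContinuousOn F cD) (hFd : DifferentiableOn ℂ F (ball 0 1))
    {ε : ℝ} (hε : 0 < ε) :
    ∃ (N : ℕ) (c : ℕ → ℂ), ∀ z ∈ cD, Complex.abs (F z - ∑ k ∈ Finset.range N, c k * z ^ k) ≤ ε := by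
  -- uniform continuity
  have hcomp : IsCompact cD := isCompact_closedBall 0 1
  have huc : UniformContinuousOn F cD := hcomp.uniformContinuousOn_of_continuous hFc
  rw [Metric.uniformContinuousOn_iff] at huc
  obtain ⟨δ, hδ, hδ'⟩ := huc (ε/2) (by linarith)
  -- dilation radius
  set r : ℝ := max (1 - δ/2) (1/2) with hr_def
  have hr0 : 0 < r := lt_of_lt_of_le (by norm_num) (le_max_right _ _)
  have hr1 : r < 1 := by
    apply max_lt <;> [linarith; norm_num]
  have hrδ : 1 - r < δ := by
    have : 1 - δ/2 ≤ r := le_max_left _ _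
    linarith
  set r1 : ℝ := (2*r + 1)/3 with hr1_def
  set r2 : ℝ := (r + 2)/3 with hr2_def
  have hrr1 : r < r1 := by rw [hr1_def]; linarith
  have hr12 : r1 < r2 := by rw [hr1_def, hr2_def]; linarith
  have hr21 : r2 < 1 := by rw [hr2_def]; linarith
  have hr2pos : 0 < r2 := by rw [hr2_def]; linarith
  -- power series on closedBall 0 r2
  have hd2 : DifferentiableOn ℂ F (closedBall (0:ℂ) r2.toNNReal) := by
    apply hFd.mono
    intro z hz
    rw [Metric.mem_closedBall] at hz
    rw [Metric.mem_ball]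
    calc dist z 0 ≤ r2.toNNReal := hz
    _ = r2 := by simp [Real.coe_toNNReal r2 hr2pos.le]
    _ < 1 := hr21
  have hps : HasFPowerSeriesOnBall F (cauchyPowerSeries F 0 r2.toNNReal) 0 r2.toNNReal :=
    hd2.hasFPowerSeriesOnBall (by simpa using hr2pos)
  set p := cauchyPowerSeries F 0 r2.toNNReal with hp_def
  have hconv : TendstoUniformlyOn (fun n y => p.partialSum n y) (fun y => F (0 + y)) Filter.atTop
      (Metric.ball (0:ℂ) r1.toNNReal) := by
    apply hps.tendstoUniformlyOn
    rw [ENNReal.coe_lt_coe]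
    exact (Real.toNNReal_lt_toNNReal_iff hr2pos).mpr hr12
  rw [Metric.tendstoUniformlyOn_iff] at hconv
  have hev := hconv (ε/2) (by linarith)
  rw [Filter.eventually_atTop] at hev
  obtain ⟨N, hN⟩ := hev
  refine ⟨N, fun k => p.coeff k * (r:ℂ) ^ k, fun z hz => ?_⟩
  have hzle : Complex.abs z ≤ 1 := by
    simpa [cD, Complex.dist_eq] using hz
  have hrz_mem : (r:ℂ) * z ∈ Metric.ball (0:ℂ) r1.toNNReal := by
    rw [Metric.mem_ball, dist_zero_right]
    have : ‖(r:ℂ) * z‖ ≤ r := by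
      rw [norm_mul]
      calc ‖(r:ℂ)‖ * ‖z‖ ≤ ‖(r:ℂ)‖ * 1 := by
            apply mul_le_mul_of_nonneg_left _ (norm_nonneg _)
            simpa [Complex.norm_eq_abs] using hzle
      _ = r := by simp [Complex.norm_real, abs_of_pos hr0]
    calc ‖(r:ℂ) * z‖ ≤ r := this
    _ < r1.toNNReal := by
        rw [Real.coe_toNNReal r1 (by rw [hr1_def]; linarith)]
        exact hrr1
  have hrz_cD : (r:ℂ) * z ∈ cD := by
    rw [cD, Metric.mem_closedBall, dist_zero_right, norm_mul]
    calc ‖(r:ℂ)‖ * ‖z‖ ≤ 1 * 1 := by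
          apply mul_le_mul
          · simp [Complex.norm_real, abs_of_pos hr0]; exact hr1.le
          · simpa [Complex.norm_eq_abs] using hzle
          · exact norm_nonneg _
          · norm_num
    _ = 1 := by norm_num
  -- first piece : |F z - F (r z)| ≤ ε/2
  have hd1 : dist (F z) (F ((r:ℂ) * z)) ≤ ε/2 := by
    by_cases hzr : z = (r:ℂ)*z
    · rw [← hzr]; simp; linarith
    apply le_of_lt
    apply hδ' z hz ((r:ℂ)*z) hrz_cD
    rw [Complex.dist_eq, Complex.norm_eq_abs]
    have : z - (r:ℂ)*z = (1 - (r:ℂ))*z := by ring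
    rw [this, map_mul]
    calc Complex.abs (1 - (r:ℂ)) * Complex.abs z ≤ Complex.abs (1 - (r:ℂ)) * 1 :=
          mul_le_mul_of_nonneg_left hzle (Complex.abs.nonneg _)
    _ = |1 - r| := by
        rw [mul_one]
        rw [show (1 - (r:ℂ)) = ((1 - r : ℝ) : ℂ) by push_cast; ring]
        exact Complex.abs_ofReal _
    _ = 1 - r := by rw [abs_of_pos (by linarith)]
    _ < δ := hrδ
  -- second piece
  have hd2' : dist (F ((r:ℂ)*z)) (p.partialSum N ((r:ℂ)*z)) < ε/2 := by
    have := hN N le_rfl ((r:ℂ)*z) hrz_mem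
    simpa using this
  -- partial sum equals polynomial
  have hpoly : p.partialSum N ((r:ℂ)*z) = ∑ k ∈ Finset.range N, (p.coeff k * (r:ℂ)^k) * z ^ k := by
    rw [FormalMultilinearSeries.partialSum]
    apply Finset.sum_congr rfl
    intro k _
    rw [FormalMultilinearSeries.apply_eq_pow_smul_coeff]
    rw [smul_eq_mul, mul_pow]
    ring
  have := dist_triangle (F z) (F ((r:ℂ)*z)) (p.partialSum N ((r:ℂ)*z))
  rw [hpoly] at this hd2'
  have hfinal : dist (F z) (∑ k ∈ Finset.range N, (p.coeff k * (r:ℂ)^k) * z ^ k) ≤ ε := by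
    linarith
  simpa [Complex.dist_eq] using hfinal

section KEY
variable {ψ : ↥cD → ℂ}

lemma psiA_mul_mem {h : ↥cD → ℂ} (hh : MemDiscAlg h) : (fun z => ψ z * h z) ∈ psiA ψ :=
  ⟨h, hh, rfl⟩

lemma psiA_self_mem : ψ ∈ psiA ψ :=
  ⟨fun _ => 1, memDA_one, by funext z; simp⟩

lemma psiA_zero_mem : (0 : ↥cD → ℂ) ∈ psiA ψ :=
  ⟨fun _ => 0, memDA_const 0, by funext z; simp⟩

lemma psiA_memDA (hψ : MemDiscAlg ψ) {f : ↥cD → ℂ} (hf : f ∈ psiA ψ) :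
    MemDiscAlg f := by
  obtain ⟨g, hg, rfl⟩ := hf; exact hψ.mul hg

theorem key_lemma (hψ : MemDiscAlg ψ) {T : (↥cD → ℂ) → (↥cD → ℂ)}
    (hT : IsAlgAutOn (psiA ψ) T) (w : ↥cD) (hw : T ψ w ≠ 0) :
    ∃ v : ↥cD, ψ v = T ψ w ∧
      ∀ h : ↥cD → ℂ, MemDiscAlg h → T (fun z => ψ z * h z) w = T ψ w * h v := by
  obtain ⟨hTmem, hTadd, hTsmul, hTmul, hTinj, hTsurj⟩ := hT
  set χ : (↥cD → ℂ) → ℂ := fun f => T f w with hχ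
  have hχmul : ∀ f ∈ psiA ψ, ∀ g ∈ psiA ψ, χ (fun z => f z * g z) = χ f * χ g := by
    intro f hf g hg
    have h2 : T (f * g) w = T f w * T g w := by rw [hTmul f hf g hg]; rfl
    exact h2
  have hχadd : ∀ f ∈ psiA ψ, ∀ g ∈ psiA ψ, χ (fun z => f z + g z) = χ f + χ g := by
    intro f hf g hg
    have h2 : T (f + g) w = T f w + T g w := by rw [hTadd f hf g hg]; rfl
    exact h2
  have hχsmul : ∀ (c : ℂ), ∀ f ∈ psiA ψ, χ (fun z => c * f z) = c * χ f := by
    intro c f hf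
    have h2 : T (c • f) w = c * T f w := by rw [hTsmul c f hf]; rfl
    exact h2
  have hψψ : χ (fun z => ψ z * ψ z) = (χ ψ)^2 := by
    rw [hχmul ψ psiA_self_mem ψ psiA_self_mem]; ring
  set D : ℂ := (χ ψ)^2 with hD
  have hD0 : D ≠ 0 := pow_ne_zero 2 hw
  set χt : (↥cD → ℂ) → ℂ := fun h => χ (fun z => ψ z * (ψ z * h z)) / D with hχt
  have hmem2 : ∀ {h : ↥cD → ℂ}, MemDiscAlg h → (fun z => ψ z * (ψ z * h z)) ∈ psiA ψ :=
    fun hh => psiA_mul_mem (hψ.mul hh)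
  have hχt_one : χt (fun _ => 1) = 1 := by
    have he : (fun z => ψ z * (ψ z * (1:ℂ))) = (fun z => ψ z * ψ z) := by
      funext z; ring
    rw [hχt]; simp only [he, hψψ]
    field_simp
  have hχt_mul : ∀ {h₁ h₂ : ↥cD → ℂ}, MemDiscAlg h₁ → MemDiscAlg h₂ →
      χt (fun z => h₁ z * h₂ z) = χt h₁ * χt h₂ := by
    intro h₁ h₂ hh₁ hh₂
    have eL : χ (fun z => ψ z * (ψ z * h₁ z)) * χ (fun z => ψ z * (ψ z * h₂ z))
        = χ (fun z => (ψ z * (ψ z * h₁ z)) * (ψ z * (ψ z * h₂ z))) :=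
      (hχmul _ (hmem2 hh₁) _ (hmem2 hh₂)).symm
    have eR : χ (fun z => ψ z * (ψ z * (h₁ z * h₂ z))) * χ (fun z => ψ z * ψ z)
        = χ (fun z => (ψ z * (ψ z * (h₁ z * h₂ z))) * (ψ z * ψ z)) :=
      (hχmul _ (hmem2 (hh₁.mul hh₂)) _ (psiA_mul_mem hψ)).symm
    have eM : (fun z => (ψ z * (ψ z * h₁ z)) * (ψ z * (ψ z * h₂ z)))
        = (fun z => (ψ z * (ψ z * (h₁ z * h₂ z))) * (ψ z * ψ z)) := by
      funext z; ring
    have e1 : χ (fun z => ψ z * (ψ z * h₁ z)) * χ (fun z => ψ z * (ψ z * h₂ z))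
        = χ (fun z => ψ z * (ψ z * (h₁ z * h₂ z))) * D := by
      rw [eL, eM, ← eR, hψψ]
    rw [hχt]
    simp only []
    rw [div_mul_div_comm, e1, mul_div_mul_right _ _ hD0]
  have hχt_add : ∀ {h₁ h₂ : ↥cD → ℂ}, MemDiscAlg h₁ → MemDiscAlg h₂ →
      χt (fun z => h₁ z + h₂ z) = χt h₁ + χt h₂ := by
    intro h₁ h₂ hh₁ hh₂
    have eA : χ (fun z => (ψ z * (ψ z * h₁ z)) + (ψ z * (ψ z * h₂ z)))
        = χ (fun z => ψ z * (ψ z * h₁ z)) + χ (fun z => ψ z * (ψ z * h₂ z)) :=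
      hχadd _ (hmem2 hh₁) _ (hmem2 hh₂)
    have eM : (fun z => ψ z * (ψ z * (h₁ z + h₂ z)))
        = (fun z => (ψ z * (ψ z * h₁ z)) + (ψ z * (ψ z * h₂ z))) := by
      funext z; ring
    rw [hχt]; simp only [eM, eA]; ring
  have hχt_smul : ∀ (c : ℂ), ∀ {h : ↥cD → ℂ}, MemDiscAlg h →
      χt (fun z => c * h z) = c * χt h := by
    intro c h hh
    have eA : χ (fun z => c * (ψ z * (ψ z * h z))) = c * χ (fun z => ψ z * (ψ z * h z)) :=
      hχsmul c _ (hmem2 hh)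
    have eM : (fun z => ψ z * (ψ z * (c * h z)))
        = (fun z => c * (ψ z * (ψ z * h z))) := by funext z; ring
    rw [hχt]; simp only [eM, eA]; ring
  -- boundedness of χt
  have hχt_bound : ∀ {h : ↥cD → ℂ}, MemDiscAlg h → ∀ {m : ℝ},
      (∀ z, Complex.abs (h z) ≤ m) → Complex.abs (χt h) ≤ m := by
    intro h hh m hm
    by_contra hcon
    push_neg at hcon
    set c : ℂ := χt h with hc
    obtain ⟨H, hHc, hHd, hH⟩ := hh
    have hne : ∀ x ∈ cD, H x - c ≠ 0 := by
      intro x hx h0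
      rw [sub_eq_zero] at h0
      have : Complex.abs (H x) ≤ m := by rw [hH ⟨x, hx⟩]; exact hm ⟨x, hx⟩
      rw [h0] at this; linarith
    set u : ↥cD → ℂ := fun z => (h z - c)⁻¹ with hu
    have hu_mem : MemDiscAlg u := by
      refine ⟨fun x => (H x - c)⁻¹, ?_, ?_, fun z => by
        show (H ↑z - c)⁻¹ = (h z - c)⁻¹; rw [hH z]⟩
      · exact (hHc.sub continuousOn_const).inv₀ hne
      · refine (hHd.sub (differentiableOn_const c)).inv ?_
        intro x hx; exact hne x (ball_subset_cD hx)
    have hc_mem : MemDiscAlg (fun z => h z - c) := by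
      have h9 := MemDiscAlg.add ⟨H, hHc, hHd, hH⟩ (memDA_const (-c))
      simpa [sub_eq_add_neg] using h9
    have hprod : (fun z => (h z - c) * u z) = (fun _ => (1:ℂ)) := by
      funext z
      rw [hu]
      apply mul_inv_cancel₀
      intro h0
      rw [sub_eq_zero] at h0
      have : Complex.abs (h z) ≤ m := hm z
      rw [h0] at this; linarith
    have e1 : χt (fun z => (h z - c) * u z) = χt (fun z => h z - c) * χt u :=
      hχt_mul hc_mem hu_mem
    rw [hprod, hχt_one] at e1
    have econst : ∀ d : ℂ, χt (fun _ : ↥cD => d) = d := by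
      intro d
      have eM : (fun z : ↥cD => ψ z * (ψ z * d)) = (fun z => d * (ψ z * ψ z)) :=
        funext fun z => by ring
      have e3 : χ (fun z : ↥cD => d * (ψ z * ψ z)) = d * χ (fun z => ψ z * ψ z) :=
        hχsmul d _ (psiA_mul_mem hψ)
      calc χt (fun _ : ↥cD => d) = χ (fun z : ↥cD => ψ z * (ψ z * d)) / D := rfl
      _ = χ (fun z : ↥cD => d * (ψ z * ψ z)) / D := by rw [eM]
      _ = d * D / D := by rw [e3, hψψ]
      _ = d := by field_simp
    have e2 : χt (fun z => h z - c) = 0 := by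
      have h2 : χt (fun z => h z + (fun _ : ↥cD => -c) z) = χt h + χt (fun _ : ↥cD => -c) :=
        hχt_add ⟨H, hHc, hHd, hH⟩ (memDA_const (-c))
      have eM : (fun z => h z - c) = (fun z => h z + (fun _ : ↥cD => -c) z) := by
        funext z; simp [sub_eq_add_neg]
      rw [eM, h2, econst (-c), hc]; ring
    rw [e2, zero_mul] at e1
    exact one_ne_zero e1
  -- constants
  have econst : ∀ d : ℂ, χt (fun _ : ↥cD => d) = d := by
    intro d
    have eM : (fun z : ↥cD => ψ z * (ψ z * d)) = (fun z => d * (ψ z * ψ z)) :=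
      funext fun z => by ring
    have e3 : χ (fun z : ↥cD => d * (ψ z * ψ z)) = d * χ (fun z => ψ z * ψ z) :=
      hχsmul d _ (psiA_mul_mem hψ)
    calc χt (fun _ : ↥cD => d) = χ (fun z : ↥cD => ψ z * (ψ z * d)) / D := rfl
    _ = χ (fun z : ↥cD => d * (ψ z * ψ z)) / D := by rw [eM]
    _ = d * D / D := by rw [e3, hψψ]
    _ = d := by field_simp
  -- the point v
  set v₀ : ℂ := χt (fun z => (z:ℂ)) with hv₀
  have hv₀_le : Complex.abs v₀ ≤ 1 := hχt_bound memDA_id coe_abs_le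
  set v : ↥cD := ⟨v₀, mem_cD_iff.mpr hv₀_le⟩ with hv
  -- monomials
  have hmono : ∀ k : ℕ, χt (fun z : ↥cD => (z:ℂ)^k) = v₀^k := by
    intro k; induction k with
    | zero =>
        have eM : (fun z : ↥cD => (z:ℂ)^0) = (fun _ : ↥cD => (1:ℂ)) := by funext z; simp
        rw [eM, econst 1]; simp
    | succ k ih =>
        have h2 : χt (fun z : ↥cD => (z:ℂ)^k * (z:ℂ)) = χt (fun z : ↥cD => (z:ℂ)^k) * χt (fun z : ↥cD => (z:ℂ)) :=
          hχt_mul (memDA_pow k) memDA_id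
        have eM : (fun z : ↥cD => (z:ℂ)^(k+1)) = (fun z : ↥cD => (z:ℂ)^k * (z:ℂ)) := by
          funext z; rw [pow_succ]
        rw [eM, h2, ih, pow_succ]
  -- polynomial functions
  have hpolyval : ∀ (N : ℕ) (cf : ℕ → ℂ),
      χt (fun z : ↥cD => ∑ k ∈ Finset.range N, cf k * (z:ℂ)^k)
        = ∑ k ∈ Finset.range N, cf k * v₀^k := by
    intro N cf; induction N with
    | zero =>
        have eM : (fun z : ↥cD => ∑ k ∈ Finset.range 0, cf k * (z:ℂ)^k) = (fun _ : ↥cD => (0:ℂ)) := by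
          funext z; simp
        rw [eM, econst 0]; simp
    | succ N ih =>
        have hsm : χt (fun z : ↥cD => cf N * (z:ℂ)^N) = cf N * χt (fun z : ↥cD => (z:ℂ)^N) :=
          hχt_smul (cf N) (memDA_pow N)
        have h2 : χt (fun z : ↥cD => (fun z : ↥cD => ∑ k ∈ Finset.range N, cf k * (z:ℂ)^k) z
              + (fun z : ↥cD => cf N * (z:ℂ)^N) z)
            = χt (fun z : ↥cD => ∑ k ∈ Finset.range N, cf k * (z:ℂ)^k)
              + χt (fun z : ↥cD => cf N * (z:ℂ)^N) :=
          hχt_add (memDA_polyfun N cf) (MemDiscAlg.smul (cf N) (memDA_pow N))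
        have eM : (fun z : ↥cD => ∑ k ∈ Finset.range (N+1), cf k * (z:ℂ)^k)
            = (fun z : ↥cD => (fun z : ↥cD => ∑ k ∈ Finset.range N, cf k * (z:ℂ)^k) z
              + (fun z : ↥cD => cf N * (z:ℂ)^N) z) := by
          funext z; simp [Finset.sum_range_succ]
        rw [eM, h2, ih, hsm, hmono N, Finset.sum_range_succ]
  -- main value identity
  have hval : ∀ {h : ↥cD → ℂ}, MemDiscAlg h → χt h = h v := by
    intro h hh
    obtain ⟨H, hHc, hHd, hH⟩ := hh
    have key : ∀ ε : ℝ, 0 < ε → Complex.abs (χt h - h v) ≤ 2*ε := by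
      intro ε hε
      obtain ⟨N, cf, happrox⟩ := poly_approx hHc hHd hε
      set P : ↥cD → ℂ := fun z => ∑ k ∈ Finset.range N, cf k * (z:ℂ)^k with hP
      have hPmem : MemDiscAlg P := memDA_polyfun N cf
      set S : ℂ := ∑ k ∈ Finset.range N, cf k * v₀^k with hS
      have hdiff : χt (fun z => h z + (-1) * P z) = χt h - S := by
        have h1 : χt (fun z => h z + (fun z => (-1) * P z) z)
            = χt h + χt (fun z => (-1) * P z) :=
          hχt_add ⟨H, hHc, hHd, hH⟩ (MemDiscAlg.smul (-1) hPmem)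
        have h2 : χt (fun z => (-1) * P z) = (-1) * χt P := hχt_smul (-1) hPmem
        have h3 : χt P = S := hpolyval N cf
        calc χt (fun z => h z + (-1) * P z) = χt h + χt (fun z => (-1) * P z) := h1
        _ = χt h + (-1) * S := by rw [h2, h3]
        _ = χt h - S := by ring
      have hmemdiff : MemDiscAlg (fun z => h z + (-1) * P z) :=
        MemDiscAlg.add ⟨H, hHc, hHd, hH⟩ (MemDiscAlg.smul (-1) hPmem)
      have hbdd : ∀ z : ↥cD, Complex.abs ((fun z => h z + (-1) * P z) z) ≤ ε := by
        intro z
        have h4 := happrox ↑z z.2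
        have h5 : h z + (-1) * P z = H ↑z - ∑ k ∈ Finset.range N, cf k * (z:ℂ)^k := by
          rw [hH z]
          show h z + (-1) * (∑ k ∈ Finset.range N, cf k * (z:ℂ)^k) = h z - ∑ k ∈ Finset.range N, cf k * (z:ℂ)^k
          ring
        show Complex.abs (h z + (-1) * P z) ≤ ε
        rw [h5]; exact h4
      have h1 : Complex.abs (χt h - S) ≤ ε := by
        rw [← hdiff]; exact hχt_bound hmemdiff hbdd
      have h2 : Complex.abs (S - h v) ≤ ε := by
        have h4 := happrox ↑v v.2
        have h5 : h v = H ↑v := (hH v).symm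
        have h6 : (v:ℂ) = v₀ := rfl
        rw [← Complex.abs.map_neg]
        have h7 : -(S - h v) = H ↑v - ∑ k ∈ Finset.range N, cf k * (v:ℂ)^k := by
          rw [h5, hS, h6]; ring
        rw [h7]; exact h4
      calc Complex.abs (χt h - h v) ≤ Complex.abs (χt h - S) + Complex.abs (S - h v) := by
            have := Complex.abs.sub_le (χt h) S (h v); simpa using this
      _ ≤ 2*ε := by linarith
    by_contra hne2
    have hpos : 0 < Complex.abs (χt h - h v) :=
      Complex.abs.pos (sub_ne_zero.mpr hne2)
    have := key (Complex.abs (χt h - h v) / 3) (by linarith)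
    linarith
  -- conclusion
  refine ⟨v, ?_, ?_⟩
  · have e1 : χ (fun z => (ψ z * ψ z) * ψ z) = χ (fun z => ψ z * ψ z) * χ ψ :=
      hχmul _ (psiA_mul_mem hψ) _ psiA_self_mem
    have eM : (fun z => ψ z * (ψ z * ψ z)) = (fun z => (ψ z * ψ z) * ψ z) := by
      funext z; ring
    calc ψ v = χt ψ := (hval hψ).symm
    _ = χ (fun z => ψ z * (ψ z * ψ z)) / D := rfl
    _ = χ (fun z => (ψ z * ψ z) * ψ z) / D := by rw [eM]
    _ = (D * χ ψ) / D := by rw [e1, hψψ]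
    _ = χ ψ := by field_simp
  · intro h hh
    have e1 : χ (fun z => (ψ z * h z) * ψ z) = χ (fun z => ψ z * h z) * χ ψ :=
      hχmul _ (psiA_mul_mem hh) _ psiA_self_mem
    have eM : (fun z => (ψ z * h z) * ψ z) = (fun z => ψ z * (ψ z * h z)) := by
      funext z; ring
    have e2 : χ (fun z => ψ z * (ψ z * h z)) = h v * D := by
      have h3 : χt h = h v := hval hh
      have h4 : χ (fun z => ψ z * (ψ z * h z)) / D = h v := h3
      exact (div_eq_iff hD0).mp h4
    have e3 : χ (fun z => ψ z * h z) * χ ψ = (χ ψ * h v) * χ ψ := by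
      rw [← e1, eM, e2, hD]; ring
    have := mul_right_cancel₀ hw e3
    exact this
end KEY

section INV
variable {ψ : ↥cD → ℂ}

lemma psiA_add {f g : ↥cD → ℂ} (hf : f ∈ psiA ψ) (hg : g ∈ psiA ψ) : f + g ∈ psiA ψ := by
  obtain ⟨a, ha, rfl⟩ := hf; obtain ⟨b, hb, rfl⟩ := hg
  refine ⟨fun z => a z + b z, ha.add hb, ?_⟩
  funext z; show ψ z * a z + ψ z * b z = ψ z * (a z + b z); ring

lemma psiA_smul (c : ℂ) {f : ↥cD → ℂ} (hf : f ∈ psiA ψ) : c • f ∈ psiA ψ := by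
  obtain ⟨a, ha, rfl⟩ := hf
  refine ⟨fun z => c * a z, MemDiscAlg.smul c ha, ?_⟩
  funext z; show c * (ψ z * a z) = ψ z * (c * a z); ring

lemma psiA_mul (hψ : MemDiscAlg ψ) {f g : ↥cD → ℂ} (hf : f ∈ psiA ψ) (hg : g ∈ psiA ψ) :
    f * g ∈ psiA ψ := by
  obtain ⟨a, ha, rfl⟩ := hf; obtain ⟨b, hb, rfl⟩ := hg
  refine ⟨fun z => a z * (ψ z * b z), ha.mul (hψ.mul hb), ?_⟩
  funext z; show (ψ z * a z) * (ψ z * b z) = ψ z * (a z * (ψ z * b z)); ring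

theorem inverse_aut (hψ : MemDiscAlg ψ) {T : (↥cD → ℂ) → (↥cD → ℂ)}
    (hT : IsAlgAutOn (psiA ψ) T) :
    ∃ T' : (↥cD → ℂ) → (↥cD → ℂ), IsAlgAutOn (psiA ψ) T' ∧
      (∀ f ∈ psiA ψ, T (T' f) = f) ∧ (∀ f ∈ psiA ψ, T' (T f) = f) := by
  classical
  obtain ⟨hTmem, hTadd, hTsmul, hTmul, hTinj, hTsurj⟩ := hT
  set T' : (↥cD → ℂ) → (↥cD → ℂ) :=
    fun f => if hf : f ∈ psiA ψ then (hTsurj hf).choose else f with hT'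
  have hspec : ∀ f (hf : f ∈ psiA ψ), T' f ∈ psiA ψ ∧ T (T' f) = f := by
    intro f hf
    have h := hTsurj hf
    constructor
    · show (if hf : f ∈ psiA ψ then (hTsurj hf).choose else f) ∈ psiA ψ
      rw [dif_pos hf]; exact h.choose_spec.1
    · show T (if hf : f ∈ psiA ψ then (hTsurj hf).choose else f) = f
      rw [dif_pos hf]; exact h.choose_spec.2
  have hTT' : ∀ f ∈ psiA ψ, T (T' f) = f := fun f hf => (hspec f hf).2
  have hT'mem : ∀ f ∈ psiA ψ, T' f ∈ psiA ψ := fun f hf => (hspec f hf).1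
  have hT'T : ∀ f ∈ psiA ψ, T' (T f) = f := by
    intro f hf
    have h1 : T f ∈ psiA ψ := hTmem f hf
    apply hTinj (hT'mem _ h1) hf
    rw [hTT' _ h1]
  refine ⟨T', ⟨hT'mem, ?_, ?_, ?_, ?_, ?_⟩, hTT', hT'T⟩
  · intro f hf g hg
    have h1 : f + g ∈ psiA ψ := psiA_add hf hg
    apply hTinj (hT'mem _ h1) (psiA_add (hT'mem f hf) (hT'mem g hg))
    rw [hTT' _ h1, hTadd _ (hT'mem f hf) _ (hT'mem g hg), hTT' _ hf, hTT' _ hg]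
  · intro c f hf
    have h1 : c • f ∈ psiA ψ := psiA_smul c hf
    apply hTinj (hT'mem _ h1) (psiA_smul c (hT'mem f hf))
    rw [hTT' _ h1, hTsmul c _ (hT'mem f hf), hTT' _ hf]
  · intro f hf g hg
    have h1 : f * g ∈ psiA ψ := psiA_mul hψ hf hg
    apply hTinj (hT'mem _ h1) (psiA_mul hψ (hT'mem f hf) (hT'mem g hg))
    rw [hTT' _ h1, hTmul _ (hT'mem f hf) _ (hT'mem g hg), hTT' _ hf, hTT' _ hg]
  · intro f hf g hg he
    rw [← hTT' f hf, ← hTT' g hg, he]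
  · intro f hf
    exact ⟨T f, hTmem f hf, hT'T f hf⟩
end INV

lemma ball_mem_nhds_of_mem {x : ℂ} (hx : x ∈ ball (0:ℂ) 1) : ball (0:ℂ) 1 ∈ 𝓝 x :=
  isOpen_ball.mem_nhds hx

lemma not_id_zero_on_ball {P : ℂ → ℂ} (hPd : DifferentiableOn ℂ P (ball 0 1))
    (hPne : ∃ x ∈ ball (0:ℂ) 1, P x ≠ 0) {x₀ : ℂ} (hx₀ : x₀ ∈ ball (0:ℂ) 1) :
    ∀ᶠ u in 𝓝[≠] x₀, P u ≠ 0 := by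
  have hPa : AnalyticOnNhd ℂ P (ball 0 1) := hPd.analyticOnNhd isOpen_ball
  rcases (hPa x₀ hx₀).eventually_eq_zero_or_eventually_ne_zero with h | h
  · exfalso
    obtain ⟨x₁, hx₁, hPx₁⟩ := hPne
    have hz : AnalyticOnNhd ℂ (fun _ => (0:ℂ)) (ball (0:ℂ) 1) := analyticOnNhd_const
    have heq : Set.EqOn P (fun _ => (0:ℂ)) (ball 0 1) := by
      apply hPa.eqOn_of_preconnected_of_frequently_eq hz (convex_ball _ _).isPreconnected hx₀
      exact ((h.filter_mono nhdsWithin_le_nhds).frequently)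
    exact hPx₁ (heq hx₁)
  · exact h

theorem ratio_extend {P Q : ℂ → ℂ}
    (hPd : DifferentiableOn ℂ P (ball 0 1)) (hQd : DifferentiableOn ℂ Q (ball 0 1))
    (hPne : ∃ x ∈ ball (0:ℂ) 1, P x ≠ 0)
    (hbound : ∀ x ∈ ball (0:ℂ) 1, P x ≠ 0 → Complex.abs (Q x / P x) ≤ 1) :
    ∃ φf : ℂ → ℂ, DifferentiableOn ℂ φf (ball 0 1) ∧
      (∀ x ∈ ball (0:ℂ) 1, P x ≠ 0 → φf x = Q x / P x) ∧
      (∀ x ∈ ball (0:ℂ) 1, Complex.abs (φf x) ≤ 1) := by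
  classical
  set φf : ℂ → ℂ := fun x =>
    if P x = 0 then Filter.limUnder (𝓝[≠] x) (fun u => Q u / P u) else Q x / P x with hφf
  have heval : ∀ x, P x ≠ 0 → φf x = Q x / P x := fun x hx => if_neg hx
  -- differentiability at singular points, packaged with a local punctured ball
  have hsing : ∀ x₀ ∈ ball (0:ℂ) 1, P x₀ = 0 →
      ∃ δ > 0, ball x₀ δ ⊆ ball (0:ℂ) 1 ∧ (∀ u ∈ ball x₀ δ, u ≠ x₀ → P u ≠ 0) := by
    intro x₀ hx₀ _
    have h1 := not_id_zero_on_ball hPd hPne hx₀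
    rw [eventually_nhdsWithin_iff] at h1
    have h2 : ball (0:ℂ) 1 ∈ 𝓝 x₀ := ball_mem_nhds_of_mem hx₀
    have h3 := Filter.inter_mem h1 h2
    rw [Metric.mem_nhds_iff] at h3
    obtain ⟨δ, hδ, hsub⟩ := h3
    refine ⟨δ, hδ, ?_, ?_⟩
    · intro u hu; exact (hsub hu).2
    · intro u hu hne; exact (hsub hu).1 hne
  have hdiff : ∀ x₀ ∈ ball (0:ℂ) 1, DifferentiableAt ℂ φf x₀ := by
    intro x₀ hx₀
    by_cases hP : P x₀ = 0
    · obtain ⟨δ, hδ, hsub, hne⟩ := hsing x₀ hx₀ hP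
      set f : ℂ → ℂ := fun u => Q u / P u with hf
      have hBmem : ball x₀ δ ∈ 𝓝 x₀ := isOpen_ball.mem_nhds (mem_ball_self hδ)
      have hdf : DifferentiableOn ℂ f (ball x₀ δ \ {x₀}) := by
        apply DifferentiableOn.div
        · exact hQd.mono fun u hu => hsub hu.1
        · exact hPd.mono fun u hu => hsub hu.1
        · intro u hu; exact hne u hu.1 hu.2
      have hbB : BddAbove (norm ∘ f '' (ball x₀ δ \ {x₀})) := by
        refine ⟨1, ?_⟩
        rintro y ⟨u, hu, rfl⟩
        have := hbound u (hsub hu.1) (hne u hu.1 hu.2)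
        simpa [Complex.norm_eq_abs, hf, map_div₀] using this
      have hupd := Complex.differentiableOn_update_limUnder_of_bddAbove hBmem hdf hbB
      have heq : φf =ᶠ[𝓝 x₀] Function.update f x₀ (Filter.limUnder (𝓝[≠] x₀) f) := by
        filter_upwards [hBmem] with u hu
        by_cases hux : u = x₀
        · subst hux
          rw [Function.update_self, hφf]
          simp only [if_pos hP]
        · rw [Function.update_of_ne hux]
          exact heval u (hne u hu hux)
      have hd2 : DifferentiableAt ℂ (Function.update f x₀ (Filter.limUnder (𝓝[≠] x₀) f)) x₀ :=
        hupd.differentiableAt hBmem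
      exact heq.differentiableAt_iff.mpr hd2
    · have hU : {x | P x ≠ 0} ∩ ball (0:ℂ) 1 ∈ 𝓝 x₀ := by
        apply Filter.inter_mem _ (ball_mem_nhds_of_mem hx₀)
        have hPc : ContinuousAt P x₀ :=
          (hPd.differentiableAt (ball_mem_nhds_of_mem hx₀)).continuousAt
        exact Filter.mem_of_superset (hPc.preimage_mem_nhds (compl_singleton_mem_nhds hP))
          fun u hu => hu
      have heq : φf =ᶠ[𝓝 x₀] fun u => Q u / P u := by
        filter_upwards [hU] with u hu
        exact heval u hu.1
      have hd2 : DifferentiableAt ℂ (fun u => Q u / P u) x₀ := by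
        apply DifferentiableAt.div
        · exact hQd.differentiableAt (ball_mem_nhds_of_mem hx₀)
        · exact hPd.differentiableAt (ball_mem_nhds_of_mem hx₀)
        · exact hP
      exact heq.differentiableAt_iff.mpr hd2
  have hb : ∀ x ∈ ball (0:ℂ) 1, Complex.abs (φf x) ≤ 1 := by
    intro x₀ hx₀
    by_cases hP : P x₀ = 0
    · obtain ⟨δ, hδ, hsub, hne⟩ := hsing x₀ hx₀ hP
      have hBmem : ball x₀ δ ∈ 𝓝 x₀ := isOpen_ball.mem_nhds (mem_ball_self hδ)
      have hNB : (𝓝[(ball x₀ δ) \ {x₀}] x₀).NeBot := by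
        have h1 : ball x₀ δ ∈ 𝓝[≠] x₀ := mem_nhdsWithin_of_mem_nhds hBmem
        have h2 : 𝓝[(ball x₀ δ) ∩ {x₀}ᶜ] x₀ = 𝓝[≠] x₀ := nhdsWithin_inter_of_mem h1
        rw [show (ball x₀ δ) \ {x₀} = (ball x₀ δ) ∩ {x₀}ᶜ from rfl, h2]
        infer_instance
      have hct : ContinuousAt φf x₀ := (hdiff x₀ hx₀).continuousAt
      have htend : Filter.Tendsto (fun u => Complex.abs (φf u)) (𝓝[(ball x₀ δ) \ {x₀}] x₀)
          (𝓝 (Complex.abs (φf x₀))) :=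
        (Complex.continuous_abs.continuousAt.tendsto.comp hct.tendsto).mono_left
          nhdsWithin_le_nhds
      apply le_of_tendsto htend
      filter_upwards [self_mem_nhdsWithin] with u hu
      rw [heval u (hne u hu.1 hu.2)]
      exact hbound u (hsub hu.1) (hne u hu.1 hu.2)
    · rw [heval x₀ hP]
      exact hbound x₀ hx₀ hP
  exact ⟨φf, fun x hx => (hdiff x hx).differentiableWithinAt, fun x hx h => heval x h, hb⟩

lemma schwarz_rigid {σ : ℂ → ℂ} (hd : DifferentiableOn ℂ σ (ball 0 1)) (h0 : σ 0 = 0)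
    (heq : ∀ z ∈ ball (0:ℂ) 1, Complex.abs (σ z) = Complex.abs z) :
    ∃ η : ℂ, Complex.abs η = 1 ∧ ∀ z ∈ ball (0:ℂ) 1, σ z = η * z := by
  have h01 : (0:ℂ) ∈ ball (0:ℂ) 1 := by simp
  have hball : ball (0:ℂ) 1 ∈ 𝓝 (0:ℂ) := isOpen_ball.mem_nhds h01
  set g : ℂ → ℂ := dslope σ 0 with hg
  have hgd : DifferentiableOn ℂ g (ball 0 1) := (differentiableOn_dslope hball).mpr hd
  have habs : ∀ z ∈ ball (0:ℂ) 1, Complex.abs (g z) = 1 := by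
    intro z hz
    by_cases hz0 : z = 0
    · -- continuity argument
      subst hz0
      have hNB : (𝓝[(ball (0:ℂ) 1) \ {0}] 0).NeBot := by
        have h1 : ball (0:ℂ) 1 ∈ 𝓝[≠] (0:ℂ) := mem_nhdsWithin_of_mem_nhds hball
        have h2 : 𝓝[(ball (0:ℂ) 1) ∩ {0}ᶜ] (0:ℂ) = 𝓝[≠] (0:ℂ) := nhdsWithin_inter_of_mem h1
        rw [show (ball (0:ℂ) 1) \ {0} = (ball (0:ℂ) 1) ∩ {0}ᶜ from rfl, h2]
        infer_instance
      have hct : ContinuousAt g 0 := (hgd.differentiableAt hball).continuousAt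
      have htend : Filter.Tendsto (fun u => Complex.abs (g u)) (𝓝[(ball (0:ℂ) 1) \ {0}] 0)
          (𝓝 (Complex.abs (g 0))) :=
        (Complex.continuous_abs.continuousAt.tendsto.comp hct.tendsto).mono_left
          nhdsWithin_le_nhds
      have htend1 : Filter.Tendsto (fun u => Complex.abs (g u)) (𝓝[(ball (0:ℂ) 1) \ {0}] 0)
          (𝓝 1) := by
        rw [Filter.tendsto_congr' ?_]
        · exact tendsto_const_nhds
        filter_upwards [self_mem_nhdsWithin] with u hu
        rw [hg, dslope_of_ne σ hu.2, slope_def_field]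
        rw [show σ u - σ 0 = σ u by rw [h0]; ring, show u - 0 = u by ring]
        rw [map_div₀, heq u hu.1, div_self]
        simpa using hu.2
      exact tendsto_nhds_unique htend htend1
    · rw [hg, dslope_of_ne σ hz0, slope_def_field]
      rw [show σ z - σ 0 = σ z by rw [h0]; ring, show z - 0 = z by ring]
      rw [map_div₀, heq z hz, div_self]
      simpa using hz0
  have hmax : IsMaxOn (norm ∘ g) (ball (0:ℂ) 1) 0 := by
    intro z hz
    show (norm ∘ g) z ≤ (norm ∘ g) 0
    simp only [Function.comp_apply, Complex.norm_eq_abs]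
    rw [habs z hz, habs 0 h01]
  have hconst := Complex.eqOn_of_isPreconnected_of_isMaxOn_norm
    (convex_ball (0:ℂ) 1).isPreconnected isOpen_ball hgd h01 hmax
  refine ⟨g 0, habs 0 h01, ?_⟩
  intro z hz
  have h1 : (z - 0) • g z = σ z - σ 0 := sub_smul_dslope σ 0 z
  have h2 : g z = g 0 := hconst hz
  rw [h2] at h1
  rw [h0, sub_zero, sub_zero, smul_eq_mul] at h1
  rw [← h1]; ring

lemma abs_lt_of_mem_ball {z : ℂ} (hz : z ∈ ball (0:ℂ) 1) : Complex.abs z < 1 := by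
  simpa [Complex.dist_eq] using hz
lemma mem_ball_of_abs_lt {z : ℂ} (hz : Complex.abs z < 1) : z ∈ ball (0:ℂ) 1 := by
  simpa [Complex.dist_eq] using hz

lemma mobius_contOn {a : ℂ} (ha : Complex.abs a < 1) : ContinuousOn (mobius a) cD :=
  fun z hz => (mobius_continuousAt (mobius_den_ne ha (mem_cD_iff.mp hz))).continuousWithinAt

lemma mobius_diffOn {a : ℂ} (ha : Complex.abs a < 1) :
    DifferentiableOn ℂ (mobius a) (ball 0 1) :=
  fun z hz => (mobius_differentiableAt
    (mobius_den_ne ha (abs_lt_of_mem_ball hz).le)).differentiableWithinAt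

lemma memDA_comp {h : ↥cD → ℂ} (hh : MemDiscAlg h) {Φ : ℂ → ℂ}
    (hΦc : ContinuousOn Φ cD) (hΦd : DifferentiableOn ℂ Φ (ball 0 1))
    (hmap : ∀ x ∈ cD, Φ x ∈ cD) (hmapb : ∀ x ∈ ball (0:ℂ) 1, Φ x ∈ ball (0:ℂ) 1)
    {φh : ↥cD → ↥cD} (hφh : ∀ z : ↥cD, (↑(φh z) : ℂ) = Φ ↑z) :
    MemDiscAlg (fun z => h (φh z)) := by
  obtain ⟨H, hHc, hHd, hH⟩ := hh
  refine ⟨H ∘ Φ, hHc.comp hΦc hmap, hHd.comp hΦd hmapb, ?_⟩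
  intro z
  show H (Φ ↑z) = h (φh z)
  rw [← hφh z, hH]

section BACK
variable {ψ : ↥cD → ℂ}

theorem backward_aut (hψ : MemDiscAlg ψ) (T : (↥cD → ℂ) → (↥cD → ℂ))
    {Φ : ℂ → ℂ} (hΦ : IsMobius Φ) {φh : ↥cD → ↥cD} (hφh : ∀ z : ↥cD, (↑(φh z) : ℂ) = Φ ↑z)
    {g : ↥cD → ℂ} (hg : InvDiscAlg g) (hwt : ∀ z, ψ (φh z) = ψ z * g z)
    (hTf : ∀ f ∈ psiA ψ, T f = f ∘ φh) :
    IsAlgAutOn (psiA ψ) T := by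
  obtain ⟨a, η, ha, hη, hΦeq⟩ := hΦ
  replace ha : Complex.abs a < 1 := ha
  replace hη : Complex.abs η = 1 := hη
  have hfun : Φ = fun z => η * mobius a z := by
    funext z; rw [hΦeq z, mobius, mul_div_assoc]
  have hηη : (starRingEnd ℂ) η * η = 1 := by
    have h1 : η * (starRingEnd ℂ) η = (Complex.abs η : ℂ)^2 := by
      rw [Complex.mul_conj]
      rw [Complex.normSq_eq_abs]; push_cast; ring
    rw [mul_comm] at h1; rw [h1, hη]; norm_num
  -- properties of Φ
  have hΦc : ContinuousOn Φ cD := by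
    rw [hfun]; exact continuousOn_const.mul (mobius_contOn ha)
  have hΦd : DifferentiableOn ℂ Φ (ball 0 1) := by
    rw [hfun]; exact (differentiableOn_const η).mul (mobius_diffOn ha)
  have habsΦ : ∀ x : ℂ, Complex.abs (Φ x) = Complex.abs (mobius a x) := by
    intro x; rw [hfun]; simp [map_mul, hη]
  have hmapcD : ∀ x ∈ cD, Φ x ∈ cD := fun x hx =>
    mem_cD_iff.mpr (by rw [habsΦ]; exact mobius_abs_le ha (mem_cD_iff.mp hx))
  have hmapb : ∀ x ∈ ball (0:ℂ) 1, Φ x ∈ ball (0:ℂ) 1 := fun x hx =>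
    mem_ball_of_abs_lt (by rw [habsΦ]; exact mobius_abs_lt ha (abs_lt_of_mem_ball hx))
  -- the inverse Möbius map
  set Φ' : ℂ → ℂ := fun w => mobius a ((starRingEnd ℂ) η * w) with hΦ'
  have habsη : ∀ w : ℂ, Complex.abs ((starRingEnd ℂ) η * w) = Complex.abs w := by
    intro w; rw [map_mul, Complex.abs_conj, hη, one_mul]
  have hΦ'c : ContinuousOn Φ' cD := by
    apply (mobius_contOn ha).comp (continuousOn_const.mul continuousOn_id)
    intro x hx
    rw [mem_cD_iff] at hx ⊢
    simpa [habsη] using hx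
  have hΦ'd : DifferentiableOn ℂ Φ' (ball 0 1) := by
    apply (mobius_diffOn ha).comp ((differentiableOn_const _).mul differentiableOn_id)
    intro x hx
    apply mem_ball_of_abs_lt
    simpa [habsη] using abs_lt_of_mem_ball hx
  have hmapcD' : ∀ x ∈ cD, Φ' x ∈ cD := fun x hx => mem_cD_iff.mpr
    (mobius_abs_le ha (by simpa [habsη] using mem_cD_iff.mp hx))
  have hmapb' : ∀ x ∈ ball (0:ℂ) 1, Φ' x ∈ ball (0:ℂ) 1 := fun x hx => mem_ball_of_abs_lt
    (mobius_abs_lt ha (by simpa [habsη] using abs_lt_of_mem_ball hx))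
  have hΦ'Φ : ∀ z ∈ cD, Φ' (Φ z) = z := by
    intro z hz
    rw [hfun, hΦ']
    simp only []
    rw [show (starRingEnd ℂ) η * (η * mobius a z) = mobius a z by
      rw [← mul_assoc, hηη, one_mul]]
    exact mobius_mobius ha (mem_cD_iff.mp hz)
  have hΦΦ' : ∀ z ∈ cD, Φ (Φ' z) = z := by
    intro z hz
    rw [hfun, hΦ']
    simp only []
    rw [mobius_mobius ha (by simpa [habsη] using mem_cD_iff.mp hz)]
    rw [← mul_assoc, mul_comm η _, hηη, one_mul]
  set φh' : ↥cD → ↥cD := fun z => ⟨Φ' ↑z, hmapcD' ↑z z.2⟩ with hφh'def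
  have hφh' : ∀ z : ↥cD, (↑(φh' z) : ℂ) = Φ' ↑z := fun z => rfl
  have hinv1 : ∀ z : ↥cD, φh (φh' z) = z := by
    intro z
    apply Subtype.ext
    rw [hφh (φh' z), hφh' z]
    exact hΦΦ' ↑z z.2
  have hinv2 : ∀ z : ↥cD, φh' (φh z) = z := by
    intro z
    apply Subtype.ext
    rw [hφh' (φh z), hφh z]
    exact hΦ'Φ ↑z z.2
  obtain ⟨hgDA, hg_inv, hg_invDA, hg_mul⟩ : MemDiscAlg g ∧ ∃ h, MemDiscAlg h ∧ ∀ z, g z * h z = 1 := hg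
  -- the weight identity for the inverse
  have hwt' : ∀ z : ↥cD, ψ (φh' z) = ψ z * hg_inv (φh' z) := by
    intro z
    have h1 : ψ (φh (φh' z)) = ψ (φh' z) * g (φh' z) := hwt (φh' z)
    rw [hinv1 z] at h1
    calc ψ (φh' z) = ψ (φh' z) * (g (φh' z) * hg_inv (φh' z)) := by
          rw [hg_mul (φh' z), mul_one]
    _ = (ψ (φh' z) * g (φh' z)) * hg_inv (φh' z) := by ring
    _ = ψ z * hg_inv (φh' z) := by rw [← h1]
  -- membership component
  refine ⟨?_, ?_, ?_, ?_, ?_, ?_⟩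
  · intro f hf
    obtain ⟨k, hk, rfl⟩ := hf
    rw [hTf _ ⟨k, hk, rfl⟩]
    refine ⟨fun z => g z * k (φh z), hgDA.mul (memDA_comp hk hΦc hΦd hmapcD hmapb hφh), ?_⟩
    funext z
    show ψ (φh z) * k (φh z) = ψ z * (g z * k (φh z))
    rw [hwt z]; ring
  · intro f hf k hk
    rw [hTf _ (psiA_add hf hk), hTf _ hf, hTf _ hk]; rfl
  · intro c f hf
    rw [hTf _ (psiA_smul c hf), hTf _ hf]; rfl
  · intro f hf k hk
    rw [hTf _ (psiA_mul hψ hf hk), hTf _ hf, hTf _ hk]; rfl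
  · intro f hf k hk he
    rw [hTf _ hf, hTf _ hk] at he
    funext z
    have := congrFun he (φh' z)
    simpa [Function.comp, hinv1 z] using this
  · intro f hf
    obtain ⟨k, hk, rfl⟩ := hf
    set u : ↥cD → ℂ := fun z => ψ (φh' z) * k (φh' z) with hu
    have hu_mem : u ∈ psiA ψ := by
      refine ⟨fun z => hg_inv (φh' z) * k (φh' z),
        (memDA_comp hg_invDA hΦ'c hΦ'd hmapcD' hmapb' hφh').mul
          (memDA_comp hk hΦ'c hΦ'd hmapcD' hmapb' hφh'), ?_⟩
      funext z
      show ψ (φh' z) * k (φh' z) = ψ z * (hg_inv (φh' z) * k (φh' z))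
      rw [hwt' z]; ring
    refine ⟨u, hu_mem, ?_⟩
    rw [hTf _ hu_mem]
    funext z
    show u (φh z) = ψ z * k z
    rw [hu]
    simp only [hinv2 z]
end BACK

section FH
variable {ψ : ↥cD → ℂ}

lemma weighted_comp (hψ : MemDiscAlg ψ) {T : (↥cD → ℂ) → (↥cD → ℂ)}
    (hT : IsAlgAutOn (psiA ψ) T) :
    ∃ φm : ↥cD → ↥cD, ∀ w, T ψ w ≠ 0 →
      ψ (φm w) = T ψ w ∧ ∀ h, MemDiscAlg h →
        T (fun z => ψ z * h z) w = T ψ w * h (φm w) := by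
  classical
  refine ⟨fun w => if hw : T ψ w ≠ 0 then (key_lemma hψ hT w hw).choose else w, ?_⟩
  intro w hw
  have hspec := (key_lemma hψ hT w hw).choose_spec
  constructor
  · show ψ (if hw' : T ψ w ≠ 0 then (key_lemma hψ hT w hw').choose else w) = T ψ w
    rw [dif_pos hw]; exact hspec.1
  · intro h hh
    show T (fun z => ψ z * h z) w
      = T ψ w * h (if hw' : T ψ w ≠ 0 then (key_lemma hψ hT w hw').choose else w)
    rw [dif_pos hw]; exact hspec.2 h hh

lemma Tpsi_ne_zero (hne : ∃ z, ψ z ≠ 0) {T : (↥cD → ℂ) → (↥cD → ℂ)}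
    (hT : IsAlgAutOn (psiA ψ) T) : ∃ w, T ψ w ≠ 0 := by
  obtain ⟨hTmem, hTadd, hTsmul, hTmul, hTinj, hTsurj⟩ := hT
  by_contra h
  push_neg at h
  have hTψ0 : T ψ = 0 := funext fun w => h w
  have h1 : T ((0:ℂ) • ψ) = (0:ℂ) • T ψ := hTsmul 0 ψ psiA_self_mem
  rw [zero_smul, zero_smul] at h1
  have h2 : ψ = (0 : ↥cD → ℂ) := hTinj psiA_self_mem psiA_zero_mem (hTψ0.trans h1.symm)
  obtain ⟨z, hz⟩ := hne
  exact hz (congrFun h2 z)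

lemma point_inv (hψ : MemDiscAlg ψ) {T T' : (↥cD → ℂ) → (↥cD → ℂ)}
    (hT : IsAlgAutOn (psiA ψ) T)
    (hT'T : ∀ f ∈ psiA ψ, T' (T f) = f)
    {φm φm' : ↥cD → ↥cD}
    (hφm : ∀ w, T ψ w ≠ 0 → ψ (φm w) = T ψ w ∧ ∀ h, MemDiscAlg h →
      T (fun z => ψ z * h z) w = T ψ w * h (φm w))
    (hφm' : ∀ w, T' ψ w ≠ 0 → ψ (φm' w) = T' ψ w ∧ ∀ h, MemDiscAlg h →
      T' (fun z => ψ z * h z) w = T' ψ w * h (φm' w))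
    (hT'rep : ∃ g₁, MemDiscAlg g₁ ∧ T' ψ = fun z => ψ z * g₁ z)
    (v : ↥cD) (hv : T' ψ v ≠ 0) :
    T ψ (φm' v) ≠ 0 ∧ (↑(φm (φm' v)) : ℂ) = (v : ℂ) := by
  obtain ⟨hψφ', hform'⟩ := hφm' v hv
  set w' := φm' v with hw'
  have hψv : ψ v ≠ 0 := by
    obtain ⟨g₁, hg₁, hrep⟩ := hT'rep
    intro h0
    rw [hrep] at hv
    simp only [h0, zero_mul] at hv
    exact hv rfl
  -- main identity
  have main : ∀ h : ↥cD → ℂ, MemDiscAlg h → ψ v * h v = T (fun z => ψ z * h z) w' := by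
    intro h hh
    obtain ⟨k, hk, hTk⟩ := hT.1 _ (psiA_mul_mem hh)
    have h1 : T' (fun z => ψ z * k z) = (fun z => ψ z * h z) := by
      rw [← hTk]; exact hT'T _ (psiA_mul_mem hh)
    have h2 : T' (fun z => ψ z * k z) v = T' ψ v * k w' := hform' k hk
    have h3 : ψ v * h v = T' ψ v * k w' := by rw [← h2, h1]
    have h4 : T (fun z => ψ z * h z) w' = ψ w' * k w' := by rw [hTk]
    rw [h3, h4, hψφ']
  -- case h = 1
  have hψ1 : (fun z : ↥cD => ψ z * (1:ℂ)) = ψ := funext fun z => mul_one _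
  have h1 : ψ v * 1 = T (fun z : ↥cD => ψ z * (1:ℂ)) w' := main (fun _ => 1) memDA_one
  rw [mul_one, hψ1] at h1
  have hw'ne : T ψ w' ≠ 0 := by rw [← h1]; exact hψv
  obtain ⟨hψφw', hformw'⟩ := hφm w' hw'ne
  have hcanc : ∀ h : ↥cD → ℂ, MemDiscAlg h → h v = h (φm w') := by
    intro h hh
    have h5 := main h hh
    rw [hformw' h hh, ← h1] at h5
    exact mul_left_cancel₀ hψv h5
  have hid : (fun z : ↥cD => (z:ℂ)) v = (fun z : ↥cD => (z:ℂ)) (φm w') :=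
    hcanc _ memDA_id
  exact ⟨hw'ne, hid.symm⟩

lemma ext_ne_zero {F : ℂ → ℂ} (hFc : ContinuousOn F cD) (hFd : DifferentiableOn ℂ F (ball 0 1))
    {f : ↥cD → ℂ} (hval : ∀ z : ↥cD, F ↑z = f z) (hnz : ∃ w, f w ≠ 0) :
    ∃ x ∈ ball (0:ℂ) 1, F x ≠ 0 := by
  by_contra h
  push_neg at h
  have heq : Set.EqOn F (fun _ => 0) cD :=
    eqOn_cD_ext hFc hFd continuousOn_const (differentiableOn_const 0)
      (z₀ := 0) (by simp) (isOpen_ball.mem_nhds (by simp)) (fun x hx => h x hx)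
  obtain ⟨w, hw⟩ := hnz
  exact hw (by rw [← hval w]; exact heq w.2)

lemma eqOn_ball_ext {F G : ℂ → ℂ} (hFd : DifferentiableOn ℂ F (ball 0 1))
    (hGd : DifferentiableOn ℂ G (ball 0 1))
    {S : Set ℂ} {z₀ : ℂ} (hz₀ : z₀ ∈ ball (0:ℂ) 1) (hnh : S ∈ 𝓝 z₀)
    (h : Set.EqOn F G S) : Set.EqOn F G (ball (0:ℂ) 1) := by
  have hFa : AnalyticOnNhd ℂ F (ball 0 1) := hFd.analyticOnNhd isOpen_ball
  have hGa : AnalyticOnNhd ℂ G (ball 0 1) := hGd.analyticOnNhd isOpen_ball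
  refine hFa.eqOn_of_preconnected_of_frequently_eq hGa (convex_ball _ _).isPreconnected hz₀ ?_
  have : ∀ᶠ z in 𝓝[≠] z₀, F z = G z := by
    filter_upwards [nhdsWithin_le_nhds hnh] with z hz using h hz
  exact this.frequently

lemma good_nbhd {P : ℂ → ℂ} (hPd : DifferentiableOn ℂ P (ball 0 1)) {x₀ : ℂ}
    (hx₀ : x₀ ∈ ball (0:ℂ) 1) (hP : P x₀ ≠ 0) :
    ∃ S ∈ 𝓝 x₀, S ⊆ ball (0:ℂ) 1 ∧ ∀ x ∈ S, P x ≠ 0 := by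
  have hc : ContinuousAt P x₀ := (hPd.differentiableAt (isOpen_ball.mem_nhds hx₀)).continuousAt
  have h1 : {x | P x ≠ 0} ∈ 𝓝 x₀ := hc.preimage_mem_nhds (compl_singleton_mem_nhds hP)
  exact ⟨ball (0:ℂ) 1 ∩ {x | P x ≠ 0},
    Filter.inter_mem (isOpen_ball.mem_nhds hx₀) h1, inter_subset_left, fun x hx => hx.2⟩

lemma two_points {S : Set ℂ} {x₀ : ℂ} (hS : S ∈ 𝓝 x₀) :
    ∃ x₁ ∈ S, ∃ x₂ ∈ S, x₁ ≠ x₂ := by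
  rw [Metric.mem_nhds_iff] at hS
  obtain ⟨δ, hδ, hsub⟩ := hS
  have hδ0 : ((δ:ℂ)/2) ≠ 0 := by
    apply div_ne_zero
    · exact_mod_cast hδ.ne'
    · norm_num
  refine ⟨x₀, hsub (mem_ball_self hδ), x₀ + δ/2, hsub ?_, ?_⟩
  · rw [Metric.mem_ball, Complex.dist_eq]
    rw [show x₀ + (δ:ℂ)/2 - x₀ = ((δ/2 : ℝ) : ℂ) by push_cast; ring]
    rw [Complex.norm_eq_abs, Complex.abs_ofReal, abs_of_pos (by linarith)]
    linarith
  · intro h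
    apply hδ0
    have h2 := h.symm
    rwa [add_eq_left] at h2

lemma strict_of_nonconst {f : ℂ → ℂ} (hd : DifferentiableOn ℂ f (ball 0 1))
    (hb : ∀ x ∈ ball (0:ℂ) 1, Complex.abs (f x) ≤ 1)
    (hnc : ∀ c : ℂ, ¬ (∀ x ∈ ball (0:ℂ) 1, f x = c)) :
    ∀ x ∈ ball (0:ℂ) 1, Complex.abs (f x) < 1 := by
  intro x hx
  rcases lt_or_eq_of_le (hb x hx) with h | h
  · exact h
  · exfalso
    have hmax : IsMaxOn (norm ∘ f) (ball (0:ℂ) 1) x := by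
      intro u hu
      show ‖f u‖ ≤ ‖f x‖
      rw [Complex.norm_eq_abs, Complex.norm_eq_abs, h]
      exact hb u hu
    have hconst := Complex.eqOn_of_isPreconnected_of_isMaxOn_norm
      (convex_ball (0:ℂ) 1).isPreconnected isOpen_ball hd hx hmax
    exact hnc (f x) (fun u hu => hconst hu)
end FH

theorem forward_aut {ψ : ↥cD → ℂ} (hψ : MemDiscAlg ψ) (hne : ∃ z, ψ z ≠ 0)
    {T : (↥cD → ℂ) → (↥cD → ℂ)} (hT : IsAlgAutOn (psiA ψ) T) :
    ∃ Φ : ℂ → ℂ, IsMobius Φ ∧ ∃ φh : ↥cD → ↥cD,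
        (∀ z : ↥cD, (↑(φh z) : ℂ) = Φ ↑z) ∧
        (∃ g : ↥cD → ℂ, InvDiscAlg g ∧ ∀ z, ψ (φh z) = ψ z * g z) ∧
        ∀ f ∈ psiA ψ, T f = f ∘ φh := by
  obtain ⟨T', hT', hTT', hT'T⟩ := inverse_aut hψ hT
  obtain ⟨φm, hφm⟩ := weighted_comp hψ hT
  obtain ⟨φm', hφm'⟩ := weighted_comp hψ hT'
  -- representations
  obtain ⟨g₀, hg₀, hp⟩ := hT.1 ψ psiA_self_mem
  obtain ⟨g₁, hg₁, hp'⟩ := hT'.1 ψ psiA_self_mem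
  have hqmem : (fun z : ↥cD => ψ z * (z:ℂ)) ∈ psiA ψ := psiA_mul_mem memDA_id
  obtain ⟨g₂, hg₂, hq⟩ := hT.1 _ hqmem
  obtain ⟨g₂', hg₂', hq'⟩ := hT'.1 _ hqmem
  -- extensions
  obtain ⟨Fψ, hFψc, hFψd, hFψ⟩ := hψ
  obtain ⟨G₀, hG₀c, hG₀d, hG₀⟩ := hg₀
  obtain ⟨G₁, hG₁c, hG₁d, hG₁⟩ := hg₁
  obtain ⟨G₂, hG₂c, hG₂d, hG₂⟩ := hg₂
  obtain ⟨G₂', hG₂'c, hG₂'d, hG₂'⟩ := hg₂'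
  have hψc : MemDiscAlg ψ := ⟨Fψ, hFψc, hFψd, hFψ⟩
  have hg₀c : MemDiscAlg g₀ := ⟨G₀, hG₀c, hG₀d, hG₀⟩
  have hg₁c : MemDiscAlg g₁ := ⟨G₁, hG₁c, hG₁d, hG₁⟩
  set P : ℂ → ℂ := fun x => Fψ x * G₀ x with hPdef
  set P' : ℂ → ℂ := fun x => Fψ x * G₁ x with hP'def
  set Q : ℂ → ℂ := fun x => Fψ x * G₂ x with hQdef
  set Q' : ℂ → ℂ := fun x => Fψ x * G₂' x with hQ'def
  have hPc : ContinuousOn P cD := hFψc.mul hG₀c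
  have hPd : DifferentiableOn ℂ P (ball 0 1) := hFψd.mul hG₀d
  have hP'c : ContinuousOn P' cD := hFψc.mul hG₁c
  have hP'd : DifferentiableOn ℂ P' (ball 0 1) := hFψd.mul hG₁d
  have hQd : DifferentiableOn ℂ Q (ball 0 1) := hFψd.mul hG₂d
  have hQ'd : DifferentiableOn ℂ Q' (ball 0 1) := hFψd.mul hG₂'d
  have hPval : ∀ z : ↥cD, P ↑z = T ψ z := by
    intro z; rw [hp]; show Fψ ↑z * G₀ ↑z = ψ z * g₀ z; rw [hFψ z, hG₀ z]
  have hP'val : ∀ z : ↥cD, P' ↑z = T' ψ z := by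
    intro z; rw [hp']; show Fψ ↑z * G₁ ↑z = ψ z * g₁ z; rw [hFψ z, hG₁ z]
  have hQval : ∀ z : ↥cD, Q ↑z = T (fun u : ↥cD => ψ u * (u:ℂ)) z := by
    intro z; rw [hq]; show Fψ ↑z * G₂ ↑z = ψ z * g₂ z; rw [hFψ z, hG₂ z]
  have hQ'val : ∀ z : ↥cD, Q' ↑z = T' (fun u : ↥cD => ψ u * (u:ℂ)) z := by
    intro z; rw [hq']; show Fψ ↑z * G₂' ↑z = ψ z * g₂' z; rw [hFψ z, hG₂' z]
  -- non-vanishing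
  have hTψne := Tpsi_ne_zero hne hT
  have hT'ψne := Tpsi_ne_zero hne hT'
  have hPne : ∃ x ∈ ball (0:ℂ) 1, P x ≠ 0 := ext_ne_zero hPc hPd hPval hTψne
  have hP'ne : ∃ x ∈ ball (0:ℂ) 1, P' x ≠ 0 := ext_ne_zero hP'c hP'd hP'val hT'ψne
  -- coordinate formula for φm
  have hcoe : ∀ w : ↥cD, T ψ w ≠ 0 → (↑(φm w) : ℂ) = Q ↑w / P ↑w := by
    intro w hw
    have h6 : T (fun z : ↥cD => ψ z * (z:ℂ)) w = T ψ w * ↑(φm w) := (hφm w hw).2 _ memDA_id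
    have hPw : P ↑w ≠ 0 := by rw [hPval]; exact hw
    rw [eq_div_iff hPw, hQval w, h6, hPval]; ring
  have hcoe' : ∀ w : ↥cD, T' ψ w ≠ 0 → (↑(φm' w) : ℂ) = Q' ↑w / P' ↑w := by
    intro w hw
    have h6 : T' (fun z : ↥cD => ψ z * (z:ℂ)) w = T' ψ w * ↑(φm' w) := (hφm' w hw).2 _ memDA_id
    have hPw : P' ↑w ≠ 0 := by rw [hP'val]; exact hw
    rw [eq_div_iff hPw, hQ'val w, h6, hP'val]; ring
  -- bound for the ratio
  have hbound : ∀ x ∈ ball (0:ℂ) 1, P x ≠ 0 → Complex.abs (Q x / P x) ≤ 1 := by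
    intro x hx hPx
    have hxc : x ∈ cD := ball_subset_cD hx
    have hw : T ψ ⟨x, hxc⟩ ≠ 0 := by rw [← hPval ⟨x, hxc⟩]; exact hPx
    rw [← hcoe ⟨x, hxc⟩ hw]
    exact coe_abs_le _
  have hbound' : ∀ x ∈ ball (0:ℂ) 1, P' x ≠ 0 → Complex.abs (Q' x / P' x) ≤ 1 := by
    intro x hx hPx
    have hxc : x ∈ cD := ball_subset_cD hx
    have hw : T' ψ ⟨x, hxc⟩ ≠ 0 := by rw [← hP'val ⟨x, hxc⟩]; exact hPx
    rw [← hcoe' ⟨x, hxc⟩ hw]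
    exact coe_abs_le _
  -- the analytic extensions
  obtain ⟨φf, hφfd, hφfeq, hφfb⟩ := ratio_extend hPd hQd hPne hbound
  obtain ⟨θf, hθfd, hθfeq, hθfb⟩ := ratio_extend hP'd hQ'd hP'ne hbound'
  -- pointwise inversion
  have hpoint : ∀ v : ↥cD, T' ψ v ≠ 0 → T ψ (φm' v) ≠ 0 ∧ (↑(φm (φm' v)) : ℂ) = (v:ℂ) :=
    point_inv hψc hT hT'T hφm hφm' ⟨g₁, hg₁c, hp'⟩
  have hpoint' : ∀ w : ↥cD, T ψ w ≠ 0 → T' ψ (φm w) ≠ 0 ∧ (↑(φm' (φm w)) : ℂ) = (w:ℂ) :=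
    point_inv hψc hT' hTT' hφm' hφm ⟨g₀, hg₀c, hp⟩
  -- nonconstancy
  have hφfnc : ∀ c : ℂ, ¬ (∀ x ∈ ball (0:ℂ) 1, φf x = c) := by
    intro c hc
    obtain ⟨x₀, hx₀, hPx₀⟩ := hPne
    obtain ⟨S, hS, hSball, hSP⟩ := good_nbhd hPd hx₀ hPx₀
    obtain ⟨x₁, hx₁, x₂, hx₂, hne12⟩ := two_points hS
    have key : ∀ x (hx : x ∈ S), (↑(φm' (φm ⟨x, ball_subset_cD (hSball hx)⟩)) : ℂ) = x := by
      intro x hx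
      exact (hpoint' _ (by rw [← hPval]; exact hSP x hx)).2
    have hceq : ∀ x (hx : x ∈ S), (↑(φm ⟨x, ball_subset_cD (hSball hx)⟩) : ℂ) = c := by
      intro x hx
      rw [hcoe _ (by rw [← hPval]; exact hSP x hx)]
      rw [← hφfeq x (hSball hx) (hSP x hx)]
      exact hc x (hSball hx)
    have heqm : φm ⟨x₁, ball_subset_cD (hSball hx₁)⟩ = φm ⟨x₂, ball_subset_cD (hSball hx₂)⟩ :=
      Subtype.ext ((hceq x₁ hx₁).trans (hceq x₂ hx₂).symm)
    apply hne12
    calc x₁ = ↑(φm' (φm ⟨x₁, ball_subset_cD (hSball hx₁)⟩)) := (key x₁ hx₁).symm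
    _ = ↑(φm' (φm ⟨x₂, ball_subset_cD (hSball hx₂)⟩)) := by rw [heqm]
    _ = x₂ := key x₂ hx₂
  have hθfnc : ∀ c : ℂ, ¬ (∀ x ∈ ball (0:ℂ) 1, θf x = c) := by
    intro c hc
    obtain ⟨x₀, hx₀, hPx₀⟩ := hP'ne
    obtain ⟨S, hS, hSball, hSP⟩ := good_nbhd hP'd hx₀ hPx₀
    obtain ⟨x₁, hx₁, x₂, hx₂, hne12⟩ := two_points hS
    have key : ∀ x (hx : x ∈ S), (↑(φm (φm' ⟨x, ball_subset_cD (hSball hx)⟩)) : ℂ) = x := by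
      intro x hx
      exact (hpoint _ (by rw [← hP'val]; exact hSP x hx)).2
    have hceq : ∀ x (hx : x ∈ S), (↑(φm' ⟨x, ball_subset_cD (hSball hx)⟩) : ℂ) = c := by
      intro x hx
      rw [hcoe' _ (by rw [← hP'val]; exact hSP x hx)]
      rw [← hθfeq x (hSball hx) (hSP x hx)]
      exact hc x (hSball hx)
    have heqm : φm' ⟨x₁, ball_subset_cD (hSball hx₁)⟩ = φm' ⟨x₂, ball_subset_cD (hSball hx₂)⟩ :=
      Subtype.ext ((hceq x₁ hx₁).trans (hceq x₂ hx₂).symm)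
    apply hne12
    calc x₁ = ↑(φm (φm' ⟨x₁, ball_subset_cD (hSball hx₁)⟩)) := (key x₁ hx₁).symm
    _ = ↑(φm (φm' ⟨x₂, ball_subset_cD (hSball hx₂)⟩)) := by rw [heqm]
    _ = x₂ := key x₂ hx₂
  -- strictness
  have hφfs : ∀ x ∈ ball (0:ℂ) 1, Complex.abs (φf x) < 1 := strict_of_nonconst hφfd hφfb hφfnc
  have hθfs : ∀ x ∈ ball (0:ℂ) 1, Complex.abs (θf x) < 1 := strict_of_nonconst hθfd hθfb hθfnc
  -- composition identities on the ball
  have hφθ : Set.EqOn (fun x => φf (θf x)) id (ball (0:ℂ) 1) := by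
    obtain ⟨x₀, hx₀, hPx₀⟩ := hP'ne
    obtain ⟨S, hS, hSball, hSP⟩ := good_nbhd hP'd hx₀ hPx₀
    refine eqOn_ball_ext (hφfd.comp hθfd fun x hx => mem_ball_of_abs_lt (hθfs x hx))
      differentiableOn_id hx₀ hS ?_
    intro x hx
    have hxball := hSball hx
    have hxc : x ∈ cD := ball_subset_cD hxball
    have hv : T' ψ ⟨x, hxc⟩ ≠ 0 := by rw [← hP'val ⟨x, hxc⟩]; exact hSP x hx
    have hθx : θf x = ↑(φm' ⟨x, hxc⟩) := by
      rw [hθfeq x hxball (hSP x hx), hcoe' ⟨x, hxc⟩ hv]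
    obtain ⟨hTu, hback⟩ := hpoint ⟨x, hxc⟩ hv
    have hub : (↑(φm' ⟨x, hxc⟩) : ℂ) ∈ ball (0:ℂ) 1 := by
      rw [← hθx]; exact mem_ball_of_abs_lt (hθfs x hxball)
    have hPu : P ↑(φm' ⟨x, hxc⟩) ≠ 0 := by rw [hPval]; exact hTu
    show φf (θf x) = x
    rw [hθx, hφfeq _ hub hPu, ← hcoe _ hTu]
    exact hback
  have hθφ : Set.EqOn (fun x => θf (φf x)) id (ball (0:ℂ) 1) := by
    obtain ⟨x₀, hx₀, hPx₀⟩ := hPne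
    obtain ⟨S, hS, hSball, hSP⟩ := good_nbhd hPd hx₀ hPx₀
    refine eqOn_ball_ext (hθfd.comp hφfd fun x hx => mem_ball_of_abs_lt (hφfs x hx))
      differentiableOn_id hx₀ hS ?_
    intro x hx
    have hxball := hSball hx
    have hxc : x ∈ cD := ball_subset_cD hxball
    have hv : T ψ ⟨x, hxc⟩ ≠ 0 := by rw [← hPval ⟨x, hxc⟩]; exact hSP x hx
    have hθx : φf x = ↑(φm ⟨x, hxc⟩) := by
      rw [hφfeq x hxball (hSP x hx), hcoe ⟨x, hxc⟩ hv]
    obtain ⟨hTu, hback⟩ := hpoint' ⟨x, hxc⟩ hv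
    have hub : (↑(φm ⟨x, hxc⟩) : ℂ) ∈ ball (0:ℂ) 1 := by
      rw [← hθx]; exact mem_ball_of_abs_lt (hφfs x hxball)
    have hPu : P' ↑(φm ⟨x, hxc⟩) ≠ 0 := by rw [hP'val]; exact hTu
    show θf (φf x) = x
    rw [hθx, hθfeq _ hub hPu, ← hcoe' _ hTu]
    exact hback
  -- Schwarz rigidity
  have h0ball : (0:ℂ) ∈ ball (0:ℂ) 1 := by simp
  set a : ℂ := θf 0 with ha_def
  have ha : Complex.abs a < 1 := hθfs 0 h0ball
  have hφfa : φf a = 0 := hφθ h0ball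
  have hτmaps : ∀ z ∈ ball (0:ℂ) 1, mobius a z ∈ ball (0:ℂ) 1 := fun z hz =>
    mem_ball_of_abs_lt (mobius_abs_lt ha (abs_lt_of_mem_ball hz))
  have hτd : DifferentiableOn ℂ (mobius a) (ball 0 1) := mobius_diffOn ha
  set σ : ℂ → ℂ := fun z => φf (mobius a z) with hσ_def
  have hσd : DifferentiableOn ℂ σ (ball 0 1) := hφfd.comp hτd hτmaps
  have hσmaps : ∀ z ∈ ball (0:ℂ) 1, σ z ∈ ball (0:ℂ) 1 := fun z hz =>
    mem_ball_of_abs_lt (hφfs _ (hτmaps z hz))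
  have hσ0 : σ 0 = 0 := by
    show φf (mobius a 0) = 0
    rw [show mobius a 0 = a from by rw [mobius]; simp]
    exact hφfa
  set σi : ℂ → ℂ := fun z => mobius a (θf z) with hσi_def
  have hσid : DifferentiableOn ℂ σi (ball 0 1) :=
    hτd.comp hθfd (fun x hx => mem_ball_of_abs_lt (hθfs x hx))
  have hσimaps : ∀ z ∈ ball (0:ℂ) 1, σi z ∈ ball (0:ℂ) 1 := fun z hz =>
    hτmaps _ (mem_ball_of_abs_lt (hθfs z hz))
  have hσi0 : σi 0 = 0 := by
    show mobius a (θf 0) = 0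
    rw [show θf (0:ℂ) = a from rfl, mobius]
    simp
  have hσiσ : ∀ z ∈ ball (0:ℂ) 1, σi (σ z) = z := by
    intro z hz
    show mobius a (θf (φf (mobius a z))) = z
    rw [show θf (φf (mobius a z)) = mobius a z from hθφ (hτmaps z hz)]
    exact mobius_mobius ha (abs_lt_of_mem_ball hz).le
  have hσeq : ∀ z ∈ ball (0:ℂ) 1, Complex.abs (σ z) = Complex.abs z := by
    intro z hz
    have h1 : Complex.abs (σ z) ≤ Complex.abs z :=
      Complex.abs_le_abs_of_mapsTo_ball_self hσd (fun u hu => hσmaps u hu) hσ0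
        (abs_lt_of_mem_ball hz)
    have h3 : Complex.abs (σi (σ z)) ≤ Complex.abs (σ z) :=
      Complex.abs_le_abs_of_mapsTo_ball_self hσid (fun u hu => hσimaps u hu) hσi0
        (abs_lt_of_mem_ball (hσmaps z hz))
    rw [hσiσ z hz] at h3
    exact le_antisymm h1 h3
  obtain ⟨η, hη, hσform⟩ := schwarz_rigid hσd hσ0 hσeq
  -- the Möbius map
  set Φ : ℂ → ℂ := fun z => η * (a - z) / (1 - (starRingEnd ℂ) a * z) with hΦdef
  have hΦmob : ∀ z, Φ z = η * mobius a z := by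
    intro z
    show η * (a - z) / (1 - (starRingEnd ℂ) a * z) = η * mobius a z
    rw [mobius, mul_div_assoc]
  have hφfΦ : ∀ x ∈ ball (0:ℂ) 1, φf x = Φ x := by
    intro x hx
    have h1 : mobius a x ∈ ball (0:ℂ) 1 := hτmaps x hx
    have h2 : σ (mobius a x) = η * mobius a x := hσform _ h1
    have h3 : σ (mobius a x) = φf (mobius a (mobius a x)) := rfl
    rw [mobius_mobius ha (abs_lt_of_mem_ball hx).le] at h3
    rw [← h3, h2, hΦmob]
  have hΦc : ContinuousOn Φ cD := by
    rw [show Φ = fun z => η * mobius a z from funext hΦmob]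
    exact continuousOn_const.mul (mobius_contOn ha)
  have hΦd : DifferentiableOn ℂ Φ (ball 0 1) := by
    rw [show Φ = fun z => η * mobius a z from funext hΦmob]
    exact (differentiableOn_const η).mul (mobius_diffOn ha)
  have habsΦ : ∀ x : ℂ, Complex.abs (Φ x) = Complex.abs (mobius a x) := by
    intro x; rw [hΦmob, map_mul, hη, one_mul]
  have hmapcD : ∀ x ∈ cD, Φ x ∈ cD := fun x hx =>
    mem_cD_iff.mpr (by rw [habsΦ]; exact mobius_abs_le ha (mem_cD_iff.mp hx))
  have hmapb : ∀ x ∈ ball (0:ℂ) 1, Φ x ∈ ball (0:ℂ) 1 := fun x hx =>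
    mem_ball_of_abs_lt (by rw [habsΦ]; exact mobius_abs_lt ha (abs_lt_of_mem_ball hx))
  set φh : ↥cD → ↥cD := fun z => ⟨Φ ↑z, hmapcD ↑z z.2⟩ with hφhdef
  have hφh : ∀ z : ↥cD, (↑(φh z) : ℂ) = Φ ↑z := fun z => rfl
  -- a good neighbourhood for P
  obtain ⟨x₀, hx₀, hPx₀⟩ := hPne
  obtain ⟨S, hS, hSball, hSP⟩ := good_nbhd hPd hx₀ hPx₀
  have hSdata : ∀ x (hx : x ∈ S), T ψ ⟨x, ball_subset_cD (hSball hx)⟩ ≠ 0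
      ∧ Φ x = ↑(φm ⟨x, ball_subset_cD (hSball hx)⟩) := by
    intro x hx
    have hw : T ψ ⟨x, ball_subset_cD (hSball hx)⟩ ≠ 0 := by rw [← hPval]; exact hSP x hx
    refine ⟨hw, ?_⟩
    rw [← hφfΦ x (hSball hx), hφfeq x (hSball hx) (hSP x hx), hcoe _ hw]
  -- the weight identity  ψ ∘ φh = T ψ
  have hwt0 : Set.EqOn (fun x => Fψ (Φ x)) P cD := by
    refine eqOn_cD_ext (hFψc.comp hΦc hmapcD) (hFψd.comp hΦd hmapb) hPc hPd hx₀ hS ?_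
    intro x hx
    obtain ⟨hw, hΦx⟩ := hSdata x hx
    show Fψ (Φ x) = P x
    rw [hΦx, hFψ (φm _), (hφm _ hw).1, ← hPval]
  have hψφh : ∀ z : ↥cD, ψ (φh z) = T ψ z := by
    intro z
    calc ψ (φh z) = Fψ ↑(φh z) := (hFψ (φh z)).symm
    _ = Fψ (Φ ↑z) := by rw [hφh z]
    _ = P ↑z := hwt0 z.2
    _ = T ψ z := hPval z
  have hweight : ∀ z : ↥cD, ψ (φh z) = ψ z * g₀ z := by
    intro z
    rw [hψφh z, hp]
  -- invertibility of g₀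
  have hginv : Set.EqOn (fun x => G₀ x * G₁ (Φ x)) (fun _ => 1) cD := by
    refine eqOn_cD_ext (hG₀c.mul (hG₁c.comp hΦc hmapcD)) (hG₀d.mul (hG₁d.comp hΦd hmapb))
      continuousOn_const (differentiableOn_const 1) hx₀ hS ?_
    intro x hx
    obtain ⟨hw, hΦx⟩ := hSdata x hx
    have h1 : T (fun z => ψ z * g₁ z) ⟨x, ball_subset_cD (hSball hx)⟩
        = T ψ ⟨x, ball_subset_cD (hSball hx)⟩ * g₁ (φm ⟨x, ball_subset_cD (hSball hx)⟩) :=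
      (hφm _ hw).2 g₁ hg₁c
    have h2 : T (fun z => ψ z * g₁ z) = ψ := by rw [← hp']; exact hTT' ψ psiA_self_mem
    have h3 : ψ ⟨x, ball_subset_cD (hSball hx)⟩
        = T ψ ⟨x, ball_subset_cD (hSball hx)⟩ * g₁ (φm ⟨x, ball_subset_cD (hSball hx)⟩) := by
      rw [h2] at h1; exact h1
    have hψw : ψ ⟨x, ball_subset_cD (hSball hx)⟩ ≠ 0 := by
      intro h0
      apply hw
      rw [hp]
      show ψ ⟨x, ball_subset_cD (hSball hx)⟩ * g₀ ⟨x, ball_subset_cD (hSball hx)⟩ = 0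
      rw [h0, zero_mul]
    show G₀ x * G₁ (Φ x) = 1
    rw [show G₀ x = g₀ ⟨x, ball_subset_cD (hSball hx)⟩ from hG₀ ⟨x, ball_subset_cD (hSball hx)⟩,
        hΦx, hG₁ (φm ⟨x, ball_subset_cD (hSball hx)⟩)]
    have h4 : ψ ⟨x, ball_subset_cD (hSball hx)⟩
        * (g₀ ⟨x, ball_subset_cD (hSball hx)⟩ * g₁ (φm ⟨x, ball_subset_cD (hSball hx)⟩))
        = ψ ⟨x, ball_subset_cD (hSball hx)⟩ * 1 := by
      have h5 : ψ ⟨x, ball_subset_cD (hSball hx)⟩ * g₀ ⟨x, ball_subset_cD (hSball hx)⟩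
          = T ψ ⟨x, ball_subset_cD (hSball hx)⟩ := by rw [hp]
      calc ψ _ * (g₀ _ * g₁ (φm _)) = (ψ _ * g₀ _) * g₁ (φm _) := by ring
      _ = T ψ _ * g₁ (φm _) := by rw [h5]
      _ = ψ _ := h3.symm
      _ = ψ _ * 1 := by ring
    exact mul_left_cancel₀ hψw h4
  have hg₀inv : InvDiscAlg g₀ := by
    refine ⟨hg₀c, fun z => g₁ (φh z), memDA_comp hg₁c hΦc hΦd hmapcD hmapb hφh, ?_⟩
    intro z
    have h1 := hginv z.2
    calc g₀ z * g₁ (φh z) = G₀ ↑z * G₁ ↑(φh z) := by rw [hG₀ z, hG₁ (φh z)]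
    _ = G₀ ↑z * G₁ (Φ ↑z) := by rw [hφh z]
    _ = 1 := h1
  -- the composition identity
  have hcomp : ∀ f ∈ psiA ψ, T f = f ∘ φh := by
    intro f hf
    obtain ⟨k, hk, rfl⟩ := hf
    obtain ⟨K, hKc, hKd, hK⟩ := hk
    obtain ⟨m, hm, hTfm⟩ := hT.1 _ (⟨k, ⟨K, hKc, hKd, hK⟩, rfl⟩ : (fun z => ψ z * k z) ∈ psiA ψ)
    obtain ⟨M, hMc, hMd, hM⟩ := hm
    have heq : Set.EqOn (fun x => Fψ x * M x) (fun x => Fψ (Φ x) * K (Φ x)) cD := by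
      refine eqOn_cD_ext (hFψc.mul hMc) (hFψd.mul hMd)
        ((hFψc.comp hΦc hmapcD).mul (hKc.comp hΦc hmapcD))
        ((hFψd.comp hΦd hmapb).mul (hKd.comp hΦd hmapb)) hx₀ hS ?_
      intro x hx
      obtain ⟨hw, hΦx⟩ := hSdata x hx
      have h1 : T (fun z => ψ z * k z) ⟨x, ball_subset_cD (hSball hx)⟩
          = T ψ ⟨x, ball_subset_cD (hSball hx)⟩ * k (φm ⟨x, ball_subset_cD (hSball hx)⟩) :=
        (hφm _ hw).2 k ⟨K, hKc, hKd, hK⟩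
      show Fψ x * M x = Fψ (Φ x) * K (Φ x)
      have h2 : Fψ x * M x = T (fun z => ψ z * k z) ⟨x, ball_subset_cD (hSball hx)⟩ := by
        rw [hTfm]
        show Fψ x * M x = ψ ⟨x, ball_subset_cD (hSball hx)⟩ * m ⟨x, ball_subset_cD (hSball hx)⟩
        rw [show Fψ x = ψ ⟨x, ball_subset_cD (hSball hx)⟩ from hFψ ⟨x, ball_subset_cD (hSball hx)⟩,
            show M x = m ⟨x, ball_subset_cD (hSball hx)⟩ from hM ⟨x, ball_subset_cD (hSball hx)⟩]
      have h3 : Fψ (Φ x) * K (Φ x)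
          = ψ (φm ⟨x, ball_subset_cD (hSball hx)⟩) * k (φm ⟨x, ball_subset_cD (hSball hx)⟩) := by
        rw [hΦx, hFψ (φm _), hK (φm _)]
      rw [h2, h3, h1, (hφm _ hw).1]
    funext z
    show T (fun z => ψ z * k z) z = (fun z => ψ z * k z) (φh z)
    have h4 : T (fun z => ψ z * k z) z = ψ z * m z := by rw [hTfm]
    have h5 := heq z.2
    calc T (fun z => ψ z * k z) z = ψ z * m z := h4
    _ = Fψ ↑z * M ↑z := by rw [hFψ z, hM z]
    _ = Fψ (Φ ↑z) * K (Φ ↑z) := h5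
    _ = ψ (φh z) * k (φh z) := by rw [← hφh z, hFψ (φh z), hK (φh z)]
  exact ⟨Φ, ⟨a, η, ha, hη, fun z => rfl⟩, φh, hφh, ⟨g₀, hg₀inv, hweight⟩, hcomp⟩

end Proofs

/-- for `ψ ∈ A(𝔻)` not identically zero, `T` is an algebra automorphism of
`ψ A(𝔻)` iff `T f = f ∘ φ̂` for the extension `φ̂` of some `φ ∈ Aut(𝔻)` satisfying
`ψ ∘ φ̂ = ψ · g` with `g` invertible in `A(𝔻)`. -/
theorem stmt_11 (ψ : ↥cD → ℂ) (hψ : MemDiscAlg ψ) (hne : ∃ z, ψ z ≠ 0)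
    (T : (↥cD → ℂ) → (↥cD → ℂ)) :
    IsAlgAutOn (psiA ψ) T ↔
      ∃ Φ : ℂ → ℂ, IsMobius Φ ∧ ∃ φh : ↥cD → ↥cD,
        (∀ z : ↥cD, (↑(φh z) : ℂ) = Φ ↑z) ∧
        (∃ g : ↥cD → ℂ, InvDiscAlg g ∧ ∀ z, ψ (φh z) = ψ z * g z) ∧
        ∀ f ∈ psiA ψ, T f = f ∘ φh := by
  constructor
  · intro hT
    exact forward_aut hψ hne hT
  · rintro ⟨Φ, hΦ, φh, hφh, ⟨g, hg, hwt⟩, hTf⟩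
    exact backward_aut hψ T hΦ hφh hg hwt hTf
end

section
/- Let φ ∈ Aut(𝔻) and let ψ ∈ H^∞ be not identically zero. If the composition operator C_φ (f ↦ f ∘ φ) is a well-defined algebra automorphism of ψH^∞, then mult_ψ(φ(w)) = mult_ψ(w) for every zero w of ψ in 𝔻. -/
open Complex Metric Set

local notation "𝔻" => Complex.UnitDisc

section AuxLemmas
noncomputable section


lemma aux_mem_ball (z : 𝔻) : (z : ℂ) ∈ Metric.ball (0 : ℂ) 1 := z.2

def AnalyticAt.order {f : ℂ → ℂ} {x : ℂ} (_ : AnalyticAt ℂ f x) : ℕ∞ := analyticOrderAt f x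

lemma AnalyticAt.order_eq_top_iff {f : ℂ → ℂ} {x : ℂ} (hf : AnalyticAt ℂ f x) :
    hf.order = ⊤ ↔ ∀ᶠ z in nhds x, f z = 0 := analyticOrderAt_eq_top

lemma AnalyticAt.order_eq_nat_iff {f : ℂ → ℂ} {x : ℂ} (hf : AnalyticAt ℂ f x) (n : ℕ) :
    hf.order = n ↔
      ∃ (g : ℂ → ℂ), AnalyticAt ℂ g x ∧ g x ≠ 0 ∧ ∀ᶠ z in nhds x, f z = (z - x) ^ n • g z :=
  hf.analyticOrderAt_eq_natCast

lemma aux_order_pt_congr {f : ℂ → ℂ} {x y : ℂ} (h : x = y)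
    (hfx : AnalyticAt ℂ f x) (hfy : AnalyticAt ℂ f y) : hfx.order = hfy.order := by
  subst h; rfl

lemma aux_orderCongr {f g : ℂ → ℂ} {w : ℂ} (hf : AnalyticAt ℂ f w) (hg : AnalyticAt ℂ g w)
    (h : ∀ᶠ z in nhds w, f z = g z) : hf.order = hg.order := by
  rcases eq_or_ne hf.order ⊤ with ht | ht
  · rw [ht, eq_comm, AnalyticAt.order_eq_top_iff]
    rw [AnalyticAt.order_eq_top_iff] at ht
    filter_upwards [ht, h] with z h1 h2
    rw [← h2]; exact h1
  · obtain ⟨n, hn0⟩ := WithTop.ne_top_iff_exists.mp ht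
    have hn : hf.order = (n : ℕ∞) := by exact_mod_cast hn0.symm
    rw [hn, eq_comm, AnalyticAt.order_eq_nat_iff]
    obtain ⟨g₀, hg₀, hg₀ne, hev⟩ := (hf.order_eq_nat_iff n).mp hn
    refine ⟨g₀, hg₀, hg₀ne, ?_⟩
    filter_upwards [hev, h] with z h1 h2
    rw [← h2]; exact h1

lemma aux_order_eq_zero_iff {f : ℂ → ℂ} {w : ℂ} (hf : AnalyticAt ℂ f w) :
    hf.order = 0 ↔ f w ≠ 0 := by
  constructor
  · intro h
    obtain ⟨g₀, hg₀, hg₀ne, hev⟩ := (hf.order_eq_nat_iff 0).mp (by exact_mod_cast h)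
    have h2 : f w = g₀ w := by simpa using hev.self_of_nhds
    rw [h2]; exact hg₀ne
  · intro h
    have : hf.order = (0 : ℕ) := by
      rw [hf.order_eq_nat_iff]
      exact ⟨f, hf, h, by filter_upwards with z; simp⟩
    exact_mod_cast this

lemma aux_orderMul {f g : ℂ → ℂ} {w : ℂ} (hf : AnalyticAt ℂ f w) (hg : AnalyticAt ℂ g w) :
    (hf.mul hg).order = hf.order + hg.order := by
  rcases eq_or_ne hf.order ⊤ with ht | ht
  · rw [ht, top_add, AnalyticAt.order_eq_top_iff]
    rw [AnalyticAt.order_eq_top_iff] at ht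
    filter_upwards [ht] with z h1
    simp [h1]
  rcases eq_or_ne hg.order ⊤ with ht' | ht'
  · rw [ht', add_top, AnalyticAt.order_eq_top_iff]
    rw [AnalyticAt.order_eq_top_iff] at ht'
    filter_upwards [ht'] with z h1
    simp [h1]
  obtain ⟨n, hn0⟩ := WithTop.ne_top_iff_exists.mp ht
  obtain ⟨m, hm0⟩ := WithTop.ne_top_iff_exists.mp ht'
  have hn : hf.order = (n : ℕ∞) := by exact_mod_cast hn0.symm
  have hm : hg.order = (m : ℕ∞) := by exact_mod_cast hm0.symm
  obtain ⟨g₁, hg₁, hg₁ne, hev₁⟩ := (hf.order_eq_nat_iff n).mp hn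
  obtain ⟨g₂, hg₂, hg₂ne, hev₂⟩ := (hg.order_eq_nat_iff m).mp hm
  rw [hn, hm, ← Nat.cast_add, AnalyticAt.order_eq_nat_iff]
  refine ⟨fun z => g₁ z * g₂ z, hg₁.mul hg₂, mul_ne_zero hg₁ne hg₂ne, ?_⟩
  filter_upwards [hev₁, hev₂] with z h1 h2
  rw [Pi.mul_apply, h1, h2]
  simp only [smul_eq_mul, pow_add]
  ring

lemma aux_orderPow {f : ℂ → ℂ} {w : ℂ} (hf : AnalyticAt ℂ f w) (n : ℕ) :
    (hf.pow n).order = n * hf.order := by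
  induction n with
  | zero =>
    simp only [Nat.cast_zero, zero_mul]
    rw [aux_order_eq_zero_iff]
    simp
  | succ k ih =>
    have h1 : (hf.pow (k+1)).order = ((hf.pow k).mul hf).order := by
      apply aux_orderCongr
      filter_upwards with z
      rw [pow_succ]
    rw [h1, aux_orderMul (hf.pow k) hf, ih]
    push_cast
    ring

lemma aux_orderComp {F Φ : ℂ → ℂ} {w : ℂ} (hΦ : AnalyticAt ℂ Φ w) (hF : AnalyticAt ℂ F (Φ w))
    (hsub : AnalyticAt ℂ (fun z => Φ z - Φ w) w)
    (m : ℕ) (hm : hF.order = m) :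
    (hF.comp hΦ).order = m * hsub.order := by
  obtain ⟨g₀, hg₀, hg₀ne, hev⟩ := (hF.order_eq_nat_iff m).mp hm
  have hR : AnalyticAt ℂ (fun z => (Φ z - Φ w) ^ m * g₀ (Φ z)) w :=
    (hsub.pow m).mul (hg₀.comp hΦ)
  have hcongr : (hF.comp hΦ).order = hR.order := by
    apply aux_orderCongr
    have := hΦ.continuousAt.tendsto.eventually hev
    filter_upwards [this] with z h1
    simpa [Function.comp, smul_eq_mul] using h1
  rw [hcongr, aux_orderMul (hsub.pow m) (hg₀.comp hΦ), aux_orderPow hsub m]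
  have : (hg₀.comp hΦ).order = 0 := by
    rw [aux_order_eq_zero_iff]
    simpa [Function.comp] using hg₀ne
  rw [this, add_zero]

lemma aux_orderFinite {F : ℂ → ℂ} (hF : DifferentiableOn ℂ F (Metric.ball 0 1))
    {z₀ : ℂ} (hz₀ : z₀ ∈ Metric.ball (0:ℂ) 1) (hF0 : F z₀ ≠ 0) {x : ℂ}
    (hx : x ∈ Metric.ball (0:ℂ) 1) :
    (hF.analyticOnNhd isOpen_ball x hx).order ≠ ⊤ := by
  intro h
  rw [AnalyticAt.order_eq_top_iff] at h
  have := (hF.analyticOnNhd isOpen_ball).eqOn_zero_of_preconnected_of_eventuallyEq_zero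
    (convex_ball (0:ℂ) 1).isPreconnected hx h
  exact hF0 (this hz₀)

lemma aux_order_sub_const {c : ℂ} (h : AnalyticAt ℂ (fun z => z - c) c) : h.order = 1 := by
  rw [show ((1:ℕ∞)) = ((1:ℕ):ℕ∞) by rfl, AnalyticAt.order_eq_nat_iff]
  exact ⟨fun _ => 1, analyticAt_const, one_ne_zero, by filter_upwards with z; simp⟩





lemma zeroOrderAt_iff_order {f : 𝔻 → ℂ} {F : ℂ → ℂ}
    (hFd : DifferentiableOn ℂ F (Metric.ball 0 1)) (hFf : ∀ z : 𝔻, F ↑z = f z)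
    (x : 𝔻) (k : ℕ) :
    ZeroOrderAt f x k ↔ (hFd.analyticOnNhd isOpen_ball ↑x (aux_mem_ball x)).order = ↑k := by
  constructor
  · rintro ⟨g, ⟨G, hGd, hGf⟩, hgx, hfac⟩
    rw [AnalyticAt.order_eq_nat_iff]
    refine ⟨G, hGd.analyticOnNhd isOpen_ball ↑x (aux_mem_ball x), by rw [hGf]; exact hgx, ?_⟩
    filter_upwards [isOpen_ball.mem_nhds (aux_mem_ball x)] with z hz
    have h1 := hfac ⟨z, hz⟩
    have h2 := hFf ⟨z, hz⟩
    have h3 := hGf ⟨z, hz⟩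
    simp only [smul_eq_mul]
    exact h2.trans (h1.trans (congrArg _ h3.symm))
  · intro hord
    obtain ⟨g₀, hg₀a, hg₀ne, hg₀ev⟩ := (AnalyticAt.order_eq_nat_iff _ k).mp hord
    set G : ℂ → ℂ := fun z => if z = ↑x then g₀ ↑x else F z / (z - ↑x) ^ k with hGdef
    have hGg₀ : ∀ᶠ z in nhds (↑x : ℂ), G z = g₀ z := by
      filter_upwards [hg₀ev] with z hz
      by_cases h : z = ↑x
      · subst h; simp [hGdef]
      · have hne : (z - (↑x:ℂ)) ^ k ≠ 0 := pow_ne_zero _ (sub_ne_zero.2 h)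
        rw [hGdef]
        simp only [if_neg h, hz, smul_eq_mul]
        field_simp
    have hGdiff : DifferentiableOn ℂ G (Metric.ball 0 1) := by
      intro z hz
      by_cases h : z = ↑x
      · have hda : DifferentiableAt ℂ G ↑x :=
          (Filter.EventuallyEq.differentiableAt_iff hGg₀).mpr hg₀a.differentiableAt
        rw [h]
        exact hda.differentiableWithinAt
      · have h1 : DifferentiableAt ℂ (fun z => F z / (z - ↑x) ^ k) z := by
          apply DifferentiableAt.div
          · exact hFd.differentiableAt (isOpen_ball.mem_nhds hz)
          · exact (differentiableAt_id.sub (differentiableAt_const _)).pow k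
          · exact pow_ne_zero _ (sub_ne_zero.2 h)
        have heq : ∀ᶠ y in nhds z, G y = F y / (y - ↑x) ^ k := by
          filter_upwards [isOpen_compl_singleton.mem_nhds h] with y hy
          exact if_neg hy
        exact ((Filter.EventuallyEq.differentiableAt_iff heq).mpr h1).differentiableWithinAt
    refine ⟨fun z => G ↑z, ⟨G, hGdiff, fun _ => rfl⟩, ?_, ?_⟩
    · show G ↑x ≠ 0
      rw [hGdef]; simpa using hg₀ne
    · intro z
      show f z = ((z:ℂ) - (↑x:ℂ)) ^ k * G ↑z
      by_cases h : (z : ℂ) = ↑x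
      · have hGx : G ↑z = g₀ ↑x := by rw [hGdef]; simp [h]
        rw [← hFf z, hGx, h, hg₀ev.self_of_nhds, smul_eq_mul]
      · have hGz : G ↑z = F ↑z / ((↑z:ℂ) - ↑x) ^ k := if_neg h
        rw [← hFf z, hGz]
        have hne : ((z:ℂ) - (↑x:ℂ)) ^ k ≠ 0 := pow_ne_zero _ (sub_ne_zero.2 h)
        field_simp

end
end AuxLemmas

/-- if `φ ∈ Aut(𝔻)`, `ψ ∈ H^∞` is not identically zero and `C_φ` is a
well-defined algebra automorphism of `ψ H^∞`, then `mult_ψ (φ w) = mult_ψ w` for every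
zero `w` of `ψ` in `𝔻`. -/
theorem stmt_12 (φ : 𝔻 → 𝔻) (hφ : IsDiscAut φ) (ψ : 𝔻 → ℂ) (hψ : MemHinf ψ)
    (hne : ∃ z, ψ z ≠ 0) (hC : CompAutOn (psiH ψ) φ)
    (w : 𝔻) (hw : ψ w = 0) (m : ℕ) :
    ZeroOrderAt ψ (φ w) m ↔ ZeroOrderAt ψ w m := by
  classical
  obtain ⟨⟨Fψ, hFd, hFf⟩, -⟩ := hψ
  obtain ⟨⟨Φ, hΦd, hΦf⟩, hbij⟩ := hφ
  -- basic memberships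
  have h1mem : MemHinf (fun _ : 𝔻 => (1:ℂ)) :=
    ⟨⟨fun _ => 1, differentiableOn_const _, fun _ => rfl⟩, 1, fun z => by simp⟩
  have hψmem : ψ ∈ psiH ψ := ⟨fun _ => 1, h1mem, by funext z; simp⟩
  have hlinmem : MemHinf (fun z : 𝔻 => (z:ℂ) - (w:ℂ)) := by
    refine ⟨⟨fun z => z - (w:ℂ),
      (differentiable_id.sub_const _).differentiableOn, fun _ => rfl⟩, 2, fun z => ?_⟩
    have h1 : ‖(z:ℂ)‖ ≤ 1 := le_of_lt (by simpa using z.norm_lt_one)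
    have h2 : ‖(w:ℂ)‖ ≤ 1 := le_of_lt (by simpa using w.norm_lt_one)
    calc ‖(z:ℂ) - (w:ℂ)‖ ≤ ‖(z:ℂ)‖ + ‖(w:ℂ)‖ := norm_sub_le _ _
      _ ≤ 2 := by linarith
  have hfmem : (fun z : 𝔻 => ψ z * ((z:ℂ) - (w:ℂ))) ∈ psiH ψ := ⟨_, hlinmem, rfl⟩
  -- the three functional relations coming from C_φ
  obtain ⟨hfun, hhfun, hE1⟩ := hC.1 ψ hψmem
  obtain ⟨f0, hf0mem, hf0eq⟩ := hC.2.2 hψmem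
  obtain ⟨g0, hg0, rfl⟩ := hf0mem
  obtain ⟨f1, hf1mem, hf1eq⟩ := hC.2.2 hfmem
  obtain ⟨g1, hg1, rfl⟩ := hf1mem
  obtain ⟨⟨H, hHd, hHf⟩, -⟩ := hhfun
  obtain ⟨⟨G0, hG0d, hG0f⟩, -⟩ := hg0
  obtain ⟨⟨G1, hG1d, hG1f⟩, -⟩ := hg1
  -- base points
  have hwB : (↑w:ℂ) ∈ Metric.ball (0:ℂ) 1 := aux_mem_ball w
  have hbB : Φ ↑w ∈ Metric.ball (0:ℂ) 1 := by rw [hΦf w]; exact aux_mem_ball (φ w)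
  -- pointwise relations for the extensions, on the disc
  have key : ∀ z : 𝔻, Fψ (Φ ↑z) = Fψ ↑z * H ↑z := by
    intro z
    have h0 := congrFun hE1 z
    simp only [Function.comp_apply] at h0
    rw [hΦf z, hFf (φ z), hFf z, hHf z]
    exact h0
  have key0 : ∀ z : 𝔻, Fψ (Φ ↑z) * G0 (Φ ↑z) = Fψ ↑z := by
    intro z
    have h0 := congrFun hf0eq z
    simp only [Function.comp_apply] at h0
    rw [hΦf z, hFf (φ z), hFf z, hG0f (φ z)]
    exact h0
  have key1 : ∀ z : 𝔻, Fψ (Φ ↑z) * G1 (Φ ↑z) = Fψ ↑z * ((z:ℂ) - (w:ℂ)) := by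
    intro z
    have h0 := congrFun hf1eq z
    simp only [Function.comp_apply] at h0
    rw [hΦf z, hFf (φ z), hFf z, hG1f (φ z)]
    exact h0
  -- analyticity of everything in sight
  have hΦa : AnalyticAt ℂ Φ ↑w := hΦd.analyticOnNhd isOpen_ball ↑w hwB
  have hFw : AnalyticAt ℂ Fψ ↑w := hFd.analyticOnNhd isOpen_ball ↑w hwB
  have hFb : AnalyticAt ℂ Fψ (Φ ↑w) := hFd.analyticOnNhd isOpen_ball _ hbB
  have hHw : AnalyticAt ℂ H ↑w := hHd.analyticOnNhd isOpen_ball ↑w hwB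
  have hG0b : AnalyticAt ℂ G0 (Φ ↑w) := hG0d.analyticOnNhd isOpen_ball _ hbB
  have hG1b : AnalyticAt ℂ G1 (Φ ↑w) := hG1d.analyticOnNhd isOpen_ball _ hbB
  have hsub : AnalyticAt ℂ (fun z => Φ z - Φ ↑w) ↑w := hΦa.sub analyticAt_const
  have hcF : AnalyticAt ℂ (Fψ ∘ Φ) ↑w := hFb.comp hΦa
  have hcG0 : AnalyticAt ℂ (G0 ∘ Φ) ↑w := hG0b.comp hΦa
  have hcG1 : AnalyticAt ℂ (G1 ∘ Φ) ↑w := hG1b.comp hΦa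
  have hlina : AnalyticAt ℂ (fun z : ℂ => z - (w:ℂ)) ↑w := analyticAt_id.sub analyticAt_const
  -- eventual versions near w
  have evE1 : ∀ᶠ z in nhds (↑w:ℂ), (Fψ ∘ Φ) z = Fψ z * H z := by
    filter_upwards [isOpen_ball.mem_nhds hwB] with z hz
    exact key ⟨z, hz⟩
  have evE0 : ∀ᶠ z in nhds (↑w:ℂ), (Fψ ∘ Φ) z * (G0 ∘ Φ) z = Fψ z := by
    filter_upwards [isOpen_ball.mem_nhds hwB] with z hz
    exact key0 ⟨z, hz⟩
  have evE2 : ∀ᶠ z in nhds (↑w:ℂ), (Fψ ∘ Φ) z * (G1 ∘ Φ) z = Fψ z * (z - (w:ℂ)) := by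
    filter_upwards [isOpen_ball.mem_nhds hwB] with z hz
    exact key1 ⟨z, hz⟩
  -- finiteness of the orders of Fψ
  obtain ⟨z₀, hz₀⟩ := hne
  have hFz₀ : Fψ ↑z₀ ≠ 0 := by rw [hFf z₀]; exact hz₀
  have hNfin : hFw.order ≠ ⊤ := aux_orderFinite hFd (aux_mem_ball z₀) hFz₀ hwB
  have hMfin : hFb.order ≠ ⊤ := aux_orderFinite hFd (aux_mem_ball z₀) hFz₀ hbB
  obtain ⟨nn, hn0⟩ := WithTop.ne_top_iff_exists.mp hNfin
  obtain ⟨mm, hm0⟩ := WithTop.ne_top_iff_exists.mp hMfin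
  have hN : hFw.order = (nn:ℕ∞) := by exact_mod_cast hn0.symm
  have hM : hFb.order = (mm:ℕ∞) := by exact_mod_cast hm0.symm
  -- order equations
  have eqnh : (mm:ℕ∞) * hsub.order = (nn:ℕ∞) + hHw.order := by
    have h1 : hcF.order = (hFw.mul hHw).order := aux_orderCongr hcF (hFw.mul hHw) evE1
    rw [aux_orderMul hFw hHw, hN] at h1
    rw [← aux_orderComp hΦa hFb hsub mm hM]
    exact h1
  have eqn0 : (mm:ℕ∞) * hsub.order + hcG0.order = (nn:ℕ∞) := by
    have h1 : (hcF.mul hcG0).order = hFw.order := aux_orderCongr (hcF.mul hcG0) hFw evE0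
    rw [aux_orderMul hcF hcG0, hN] at h1
    rw [← aux_orderComp hΦa hFb hsub mm hM]
    exact h1
  have eqn1 : (mm:ℕ∞) * hsub.order + hcG1.order = (nn:ℕ∞) + 1 := by
    have h1 : (hcF.mul hcG1).order = (hFw.mul hlina).order :=
      aux_orderCongr (hcF.mul hcG1) (hFw.mul hlina) evE2
    rw [aux_orderMul hcF hcG1, aux_orderMul hFw hlina, hN, aux_order_sub_const hlina] at h1
    rw [← aux_orderComp hΦa hFb hsub mm hM]
    exact h1
  -- basic nonvanishing facts
  have hFw0 : Fψ (↑w:ℂ) = 0 := by rw [hFf w]; exact hw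
  have hFb0 : Fψ (Φ ↑w) = 0 := by rw [key w, hFw0, zero_mul]
  have hmm0 : mm ≠ 0 := by
    intro h0
    subst h0
    exact (aux_order_eq_zero_iff hFb).mp (by exact_mod_cast hM) hFb0
  -- hsub.order is finite and nonzero
  have hDfin : hsub.order ≠ ⊤ := by
    intro hD
    rw [hD, ENat.mul_top (by exact_mod_cast hmm0 : (mm:ℕ∞) ≠ 0), top_add] at eqn0
    exact (ENat.top_ne_coe nn) eqn0
  obtain ⟨d, hd0⟩ := WithTop.ne_top_iff_exists.mp hDfin
  have hD : hsub.order = (d:ℕ∞) := by exact_mod_cast hd0.symm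
  have hd1le : d ≠ 0 := by
    intro h0
    have : hsub.order = 0 := by rw [hD, h0]; rfl
    exact (aux_order_eq_zero_iff hsub).mp this (by simp)
  -- finiteness of the remaining orders
  have hAfin : hcG0.order ≠ ⊤ := by
    intro h0
    rw [h0, add_top] at eqn0
    exact (ENat.top_ne_coe nn) eqn0
  have hBfin : hcG1.order ≠ ⊤ := by
    intro h0
    rw [h0, add_top] at eqn1
    have : ((nn:ℕ∞) + 1) ≠ ⊤ := by
      rw [show ((nn:ℕ∞) + 1) = ((nn+1:ℕ):ℕ∞) by push_cast; ring]
      exact (ENat.coe_ne_top _)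
    exact this eqn1.symm
  have hEfin : hHw.order ≠ ⊤ := by
    intro h0
    rw [h0, add_top] at eqnh
    rw [hD] at eqnh
    have : ((mm:ℕ∞) * (d:ℕ∞)) ≠ ⊤ := by
      rw [show ((mm:ℕ∞) * (d:ℕ∞)) = ((mm*d:ℕ):ℕ∞) by push_cast; ring]
      exact (ENat.coe_ne_top _)
    exact this eqnh
  -- the orders of G0, G1 at the image point are finite
  have hG0fin : hG0b.order ≠ ⊤ := by
    intro h0
    rw [AnalyticAt.order_eq_top_iff] at h0
    have hev : ∀ᶠ z in nhds (↑w:ℂ), (G0 ∘ Φ) z = 0 := hΦa.continuousAt.tendsto.eventually h0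
    exact hAfin ((AnalyticAt.order_eq_top_iff hcG0).mpr hev)
  have hG1fin : hG1b.order ≠ ⊤ := by
    intro h0
    rw [AnalyticAt.order_eq_top_iff] at h0
    have hev : ∀ᶠ z in nhds (↑w:ℂ), (G1 ∘ Φ) z = 0 := hΦa.continuousAt.tendsto.eventually h0
    exact hBfin ((AnalyticAt.order_eq_top_iff hcG1).mpr hev)
  obtain ⟨a0, ha0'⟩ := WithTop.ne_top_iff_exists.mp hG0fin
  obtain ⟨a1, ha1'⟩ := WithTop.ne_top_iff_exists.mp hG1fin
  obtain ⟨ee, hee'⟩ := WithTop.ne_top_iff_exists.mp hEfin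
  have hA0 : hG0b.order = (a0:ℕ∞) := by exact_mod_cast ha0'.symm
  have hA1 : hG1b.order = (a1:ℕ∞) := by exact_mod_cast ha1'.symm
  have hee : hHw.order = (ee:ℕ∞) := by exact_mod_cast hee'.symm
  have hcG0ord : hcG0.order = (a0:ℕ∞) * hsub.order := aux_orderComp hΦa hG0b hsub a0 hA0
  have hcG1ord : hcG1.order = (a1:ℕ∞) * hsub.order := aux_orderComp hΦa hG1b hsub a1 hA1
  -- convert everything to ℕ
  rw [hcG0ord, hD] at eqn0
  rw [hcG1ord, hD] at eqn1
  rw [hD, hee] at eqnh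
  have e0 : mm * d + a0 * d = nn := by exact_mod_cast eqn0
  have e1 : mm * d + a1 * d = nn + 1 := by exact_mod_cast eqn1
  have eh : mm * d = nn + ee := by exact_mod_cast eqnh
  -- conclude d = 1 and mm = nn
  have hdvd0 : d ∣ nn := ⟨mm + a0, by rw [← e0]; ring⟩
  have hdvd1 : d ∣ nn + 1 := ⟨mm + a1, by rw [← e1]; ring⟩
  have hd1 : d = 1 := Nat.dvd_one.mp (by simpa using Nat.dvd_sub hdvd1 hdvd0)
  rw [hd1] at e0 eh
  simp only [mul_one] at e0 eh
  have hmn : mm = nn := by omega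
  -- finish
  rw [zeroOrderAt_iff_order hFd hFf (φ w) m, zeroOrderAt_iff_order hFd hFf w m]
  have hpt : (hFd.analyticOnNhd isOpen_ball ↑(φ w) (aux_mem_ball (φ w))).order = hFb.order :=
    aux_order_pt_congr (hΦf w).symm _ _
  rw [hpt, hM, hmn, ← hN]
end

section
/- Let w₁, …, w_k be distinct points on the unit circle, n₁, …, n_k ≥ 1, and let ψ(z) = (z − w₁)^{n₁}(z − w₂)^{n₂} ⋯ (z − w_k)^{n_k}. Let φ ∈ Aut(𝔻) with analytic extension φ̂ to the closed unit disc. Then the composition operator C_φ (f ↦ f ∘ φ) is a well-defined algebra automorphism of ψH^∞ if and only if for every j ∈ {1, …, k} there exists i ∈ {1, …, k} with φ̂(w_j) = w_i and n_i = n_j (i.e., mult_ψ(φ̂(w_j)) = mult_ψ(w_j) for 1 ≤ j ≤ k). -/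
open Complex Metric Set

local notation "𝔻" => Complex.UnitDisc

set_option maxHeartbeats 1000000

namespace Stmt15Aux

lemma denom_ne {a z : ℂ} (ha : ‖a‖ < 1) (hz : ‖z‖ ≤ 1) :
    1 - (starRingEnd ℂ) a * z ≠ 0 := by
  intro h
  have h1 : ‖(starRingEnd ℂ) a * z‖ < 1 := by
    rw [norm_mul, Complex.norm_conj]
    nlinarith [norm_nonneg a, norm_nonneg z]
  have h2 : (starRingEnd ℂ) a * z = 1 := by linear_combination -h
  rw [h2, norm_one] at h1; linarith


lemma denom_abs_ge {a z : ℂ} (ha : ‖a‖ < 1) (hz : ‖z‖ ≤ 1) :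
    1 - ‖a‖ ≤ ‖1 - (starRingEnd ℂ) a * z‖ := by
  have h1 : ‖(1 : ℂ)‖ ≤ ‖1 - (starRingEnd ℂ) a * z‖ + ‖(starRingEnd ℂ) a * z‖ := by
    calc ‖(1 : ℂ)‖ = ‖(1 - (starRingEnd ℂ) a * z) + (starRingEnd ℂ) a * z‖ := by ring_nf
      _ ≤ _ := norm_add_le _ _
  have h2 : ‖(starRingEnd ℂ) a * z‖ ≤ ‖a‖ := by
    rw [norm_mul, Complex.norm_conj]
    nlinarith [norm_nonneg a]
  simp only [norm_one] at h1
  linarith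


lemma coeff_ne {a η w : ℂ} (ha : ‖a‖ < 1) (hη : ‖η‖ = 1)
    (hw : ‖w‖ = 1) : w * (starRingEnd ℂ) a - η ≠ 0 := by
  intro h
  have h1 : w * (starRingEnd ℂ) a = η := by linear_combination h
  have : ‖w * (starRingEnd ℂ) a‖ = 1 := by rw [h1, hη]
  rw [norm_mul, hw, one_mul, Complex.norm_conj] at this
  linarith


lemma factor {a η w : ℂ} (hc : w * (starRingEnd ℂ) a - η ≠ 0) (z : ℂ)
    (hd : 1 - (starRingEnd ℂ) a * z ≠ 0) :
    (η * (a - z) / (1 - (starRingEnd ℂ) a * z) - w) * (1 - (starRingEnd ℂ) a * z)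
      = (w * (starRingEnd ℂ) a - η) * (z - (w - η * a) / (w * (starRingEnd ℂ) a - η)) := by
  rw [sub_mul, div_mul_cancel₀ _ hd, mul_sub (w * (starRingEnd ℂ) a - η), mul_div_cancel₀ _ hc]
  ring


lemma unimod_mul_conj {w : ℂ} (hw : ‖w‖ = 1) : w * (starRingEnd ℂ) w = 1 := by
  rw [Complex.mul_conj, Complex.normSq_eq_norm_sq, hw]; norm_num


lemma root_abs {a η w : ℂ} (ha : ‖a‖ < 1) (hη : ‖η‖ = 1)
    (hw : ‖w‖ = 1) :
    ‖(w - η * a) / (w * (starRingEnd ℂ) a - η)‖ = 1 := by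
  have hc := coeff_ne ha hη hw
  have hww := unimod_mul_conj hw
  have hηη := unimod_mul_conj hη
  have key : (starRingEnd ℂ) (w * (starRingEnd ℂ) a - η) * (w * η) = -(w - η * a) := by
    rw [map_sub, map_mul, Complex.conj_conj]
    linear_combination (a * η) * hww - w * hηη
  have habs : ‖w * (starRingEnd ℂ) a - η‖ = ‖w - η * a‖ := by
    have h5 := congrArg norm key
    rw [norm_mul, norm_mul, Complex.norm_conj, hw, hη, mul_one, mul_one, norm_neg] at h5
    exact h5
  rw [norm_div, habs, div_self]
  rw [← habs]
  exact norm_ne_zero_iff.2 hc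


lemma phi_root {a η w : ℂ} (ha : ‖a‖ < 1) (hη : ‖η‖ = 1)
    (hw : ‖w‖ = 1) :
    η * (a - (w - η * a) / (w * (starRingEnd ℂ) a - η))
      / (1 - (starRingEnd ℂ) a * ((w - η * a) / (w * (starRingEnd ℂ) a - η))) = w := by
  have hc := coeff_ne ha hη hw
  have hv := root_abs ha hη hw
  have hd : 1 - (starRingEnd ℂ) a * ((w - η * a) / (w * (starRingEnd ℂ) a - η)) ≠ 0 :=
    denom_ne ha (le_of_eq hv)
  have h1 := factor hc ((w - η * a) / (w * (starRingEnd ℂ) a - η)) hd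
  rw [sub_self, mul_zero] at h1
  have h2 := mul_eq_zero.1 h1
  rcases h2 with h2 | h2
  · rwa [sub_eq_zero] at h2
  · exact absurd h2 hd


lemma prod_factor {k : ℕ} (w : Fin k → ℂ) (n : Fin k → ℕ) (a η : ℂ)
    (hc : ∀ i, w i * (starRingEnd ℂ) a - η ≠ 0) (z : ℂ)
    (hdz : 1 - (starRingEnd ℂ) a * z ≠ 0) :
    (∏ i, (η * (a - z) / (1 - (starRingEnd ℂ) a * z) - w i) ^ n i)
        * (1 - (starRingEnd ℂ) a * z) ^ (∑ i, n i)
      = (∏ i, (w i * (starRingEnd ℂ) a - η) ^ n i)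
        * ∏ i, (z - (w i - η * a) / (w i * (starRingEnd ℂ) a - η)) ^ n i := by
  rw [← Finset.prod_pow_eq_pow_sum, ← Finset.prod_mul_distrib, ← Finset.prod_mul_distrib]
  apply Finset.prod_congr rfl
  intro i _
  rw [← mul_pow, ← mul_pow, factor (hc i) z hdz]


lemma eps_contra {t K2 : ℝ} {N : ℕ} (ht0 : 0 < t) (hK2 : 0 ≤ K2)
    (h : t ^ N ≤ K2 * min (t / 2) (t ^ N / (2 * (K2 + 1)))) : False := by
  have hx : 0 < t ^ N := pow_pos ht0 N
  have h2 : K2 * min (t / 2) (t ^ N / (2 * (K2 + 1))) ≤ K2 * (t ^ N / (2 * (K2 + 1))) :=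
    mul_le_mul_of_nonneg_left (min_le_right _ _) hK2
  have h4 : K2 * (t ^ N / (2 * (K2 + 1))) = (K2 / (2 * (K2 + 1))) * t ^ N := by ring
  have h5 : K2 / (2 * (K2 + 1)) < 1 := by
    rw [div_lt_one (by linarith)]; linarith
  nlinarith


lemma mobius_inj {a η z z' : ℂ} (ha : ‖a‖ < 1) (hη : ‖η‖ = 1)
    (hz : ‖z‖ ≤ 1) (hz' : ‖z'‖ ≤ 1)
    (h : η * (a - z) / (1 - (starRingEnd ℂ) a * z) = η * (a - z') / (1 - (starRingEnd ℂ) a * z')) :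
    z = z' := by
  have d1 := denom_ne ha hz
  have d2 := denom_ne ha hz'
  have hηne : η ≠ 0 := by intro h0; rw [h0, norm_zero] at hη; linarith
  rw [div_eq_div_iff d1 d2] at h
  have key : η * (1 - (starRingEnd ℂ) a * a) * (z' - z) = 0 := by linear_combination h
  have h2 : (1 : ℂ) - (starRingEnd ℂ) a * a ≠ 0 := denom_ne ha (le_of_lt ha)
  have := mul_eq_zero.1 key
  rcases this with h3 | h3
  · exact absurd h3 (mul_ne_zero hηne h2)
  · linear_combination -h3


lemma normSq_identity (a c : ℂ) :
    Complex.normSq (1 - (starRingEnd ℂ) a * c) - Complex.normSq (a - c)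
      = (1 - Complex.normSq a) * (1 - Complex.normSq c) := by
  simp only [Complex.normSq_apply, Complex.sub_re, Complex.sub_im, Complex.mul_re, Complex.mul_im,
    Complex.one_re, Complex.one_im, Complex.conj_re, Complex.conj_im]
  ring


lemma mobius_abs_le {a η c : ℂ} (ha : ‖a‖ < 1) (hη : ‖η‖ = 1)
    (hc : ‖c‖ ≤ 1) :
    ‖η * (a - c) / (1 - (starRingEnd ℂ) a * c)‖ ≤ 1 := by
  have d1 := denom_ne ha hc
  have hd : 0 < ‖1 - (starRingEnd ℂ) a * c‖ := norm_pos_iff.2 d1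
  rw [norm_div, norm_mul, hη, one_mul, div_le_one hd]
  have h1 : Complex.normSq (a - c) ≤ Complex.normSq (1 - (starRingEnd ℂ) a * c) := by
    have h2 := normSq_identity a c
    have h3 : Complex.normSq a < 1 := by
      rw [Complex.normSq_eq_norm_sq]; nlinarith [norm_nonneg a]
    have h4 : Complex.normSq c ≤ 1 := by
      rw [Complex.normSq_eq_norm_sq]; nlinarith [norm_nonneg c]
    nlinarith
  rw [Complex.normSq_eq_norm_sq, Complex.normSq_eq_norm_sq] at h1
  nlinarith [norm_nonneg (a - c), norm_nonneg (1 - (starRingEnd ℂ) a * c)]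


lemma mobius_abs_lt {a η c : ℂ} (ha : ‖a‖ < 1) (hη : ‖η‖ = 1)
    (hc : ‖c‖ < 1) :
    ‖η * (a - c) / (1 - (starRingEnd ℂ) a * c)‖ < 1 := by
  have d1 := denom_ne ha (le_of_lt hc)
  have hd : 0 < ‖1 - (starRingEnd ℂ) a * c‖ := norm_pos_iff.2 d1
  rw [norm_div, norm_mul, hη, one_mul, div_lt_one hd]
  have h1 : Complex.normSq (a - c) < Complex.normSq (1 - (starRingEnd ℂ) a * c) := by
    have h2 := normSq_identity a c
    have h3 : Complex.normSq a < 1 := by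
      rw [Complex.normSq_eq_norm_sq]; nlinarith [norm_nonneg a]
    have h4 : Complex.normSq c < 1 := by
      rw [Complex.normSq_eq_norm_sq]; nlinarith [norm_nonneg c]
    nlinarith
  rw [Complex.normSq_eq_norm_sq, Complex.normSq_eq_norm_sq] at h1
  nlinarith [norm_nonneg (a - c), norm_nonneg (1 - (starRingEnd ℂ) a * c)]


lemma phi_psi {a η c : ℂ} (ha : ‖a‖ < 1) (hη : ‖η‖ = 1)
    (hc : ‖c‖ ≤ 1)
    (hΨ : ‖(starRingEnd ℂ) η * (η * a - c) / (1 - (starRingEnd ℂ) (η * a) * c)‖ ≤ 1) :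
    η * (a - (starRingEnd ℂ) η * (η * a - c) / (1 - (starRingEnd ℂ) (η * a) * c))
      / (1 - (starRingEnd ℂ) a * ((starRingEnd ℂ) η * (η * a - c) / (1 - (starRingEnd ℂ) (η * a) * c))) = c := by
  have hηη : η * (starRingEnd ℂ) η = 1 := by
    rw [Complex.mul_conj, Complex.normSq_eq_norm_sq, hη]; norm_num
  have ha' : ‖η * a‖ < 1 := by rw [norm_mul, hη, one_mul]; exact ha
  set u := (starRingEnd ℂ) η * (η * a - c) with hu
  set D := 1 - (starRingEnd ℂ) (η * a) * c with hD
  have d1 : D ≠ 0 := denom_ne ha' hc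
  have d2 : 1 - (starRingEnd ℂ) a * (u / D) ≠ 0 := denom_ne ha hΨ
  have e1 : (a - u / D) * D = (starRingEnd ℂ) η * c * (1 - (starRingEnd ℂ) a * a) := by
    field_simp
    rw [hu, hD, map_mul]
    linear_combination (-a) * hηη
  have e2 : (1 - (starRingEnd ℂ) a * (u / D)) * D = 1 - (starRingEnd ℂ) a * a := by
    field_simp
    rw [hu, hD, map_mul]
    linear_combination (-((starRingEnd ℂ) a * a)) * hηη
  rw [div_eq_iff d2]
  have e4 : (η * (a - u / D)) * D = (c * (1 - (starRingEnd ℂ) a * (u / D))) * D := by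
    calc (η * (a - u / D)) * D = η * ((a - u / D) * D) := by ring
      _ = (c * (1 - (starRingEnd ℂ) a * (u / D))) * D := by
          rw [e1]
          linear_combination (c * (1 - (starRingEnd ℂ) a * a)) * hηη - c * e2
  exact mul_right_cancel₀ d1 e4

lemma mapsInto {k : ℕ} (w : Fin k → ℂ) (hw : ∀ j, ‖w j‖ = 1)
    (n : Fin k → ℕ) (φ : 𝔻 → 𝔻) (a η : ℂ) (ha : ‖a‖ < 1) (hη : ‖η‖ = 1)
    (hlink : ∀ z : 𝔻, (↑(φ z) : ℂ) = η * (a - ↑z) / (1 - (starRingEnd ℂ) a * ↑z))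
    (σ : Fin k → Fin k) (hσbij : Function.Bijective σ)
    (hσ1 : ∀ j, η * (a - w j) / (1 - (starRingEnd ℂ) a * w j) = w (σ j))
    (hσ2 : ∀ j, n (σ j) = n j) :
    ∀ f ∈ psiH (fun z : 𝔻 => ∏ j, ((z : ℂ) - w j) ^ (n j)),
      f ∘ φ ∈ psiH (fun z : 𝔻 => ∏ j, ((z : ℂ) - w j) ^ (n j)) := by
  set N := ∑ j, n j with hN
  set c : Fin k → ℂ := fun j => w (σ j) * (starRingEnd ℂ) a - η with hcdef
  have hc : ∀ j, c j ≠ 0 := fun j => coeff_ne ha hη (hw (σ j))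
  -- key: the factor roots are exactly the w j
  have hroot : ∀ j z, 1 - (starRingEnd ℂ) a * z ≠ 0 →
      (η * (a - z) / (1 - (starRingEnd ℂ) a * z) - w (σ j)) * (1 - (starRingEnd ℂ) a * z)
        = c j * (z - w j) := by
    intro j z hdz
    have h1 := factor (hc j) z hdz
    have h3 := factor (hc j) (w j) (denom_ne ha (le_of_eq (hw j)))
    rw [hσ1 j, sub_self, zero_mul] at h3
    have h4 : (w (σ j) * (starRingEnd ℂ) a - η) * ((w (σ j) - η * a) / (w (σ j) * (starRingEnd ℂ) a - η))
        = (w (σ j) * (starRingEnd ℂ) a - η) * w j := by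
      linear_combination h3
    have hv := mul_left_cancel₀ (hc j) h4
    rw [hv] at h1
    exact h1
  set C : ℂ := ∏ j, c j ^ n j with hC
  have hCne : C ≠ 0 := Finset.prod_ne_zero_iff.2 fun j _ => pow_ne_zero _ (hc j)
  have claim : ∀ z : ℂ, 1 - (starRingEnd ℂ) a * z ≠ 0 →
      (∏ i, (η * (a - z) / (1 - (starRingEnd ℂ) a * z) - w i) ^ n i)
          * (1 - (starRingEnd ℂ) a * z) ^ N
        = C * ∏ j, (z - w j) ^ n j := by
    intro z hdz
    have r1 : ∏ i, (η * (a - z) / (1 - (starRingEnd ℂ) a * z) - w i) ^ n i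
        = ∏ j, (η * (a - z) / (1 - (starRingEnd ℂ) a * z) - w (σ j)) ^ n j := by
      rw [← hσbij.prod_comp (fun i => (η * (a - z) / (1 - (starRingEnd ℂ) a * z) - w i) ^ n i)]
      exact Finset.prod_congr rfl fun j _ => by rw [hσ2 j]
    have r2 : ((1 - (starRingEnd ℂ) a * z) ^ N : ℂ) = ∏ j, (1 - (starRingEnd ℂ) a * z) ^ n j :=
      (Finset.prod_pow_eq_pow_sum _ _ _).symm
    rw [r1, r2, ← Finset.prod_mul_distrib]
    have r3 : ∀ j : Fin k, (η * (a - z) / (1 - (starRingEnd ℂ) a * z) - w (σ j)) ^ n j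
        * (1 - (starRingEnd ℂ) a * z) ^ n j = (c j * (z - w j)) ^ n j := by
      intro j
      rw [← mul_pow, hroot j z hdz]
    rw [Finset.prod_congr rfl fun j _ => r3 j]
    rw [hC, ← Finset.prod_mul_distrib]
    exact Finset.prod_congr rfl fun j _ => (mul_pow _ _ _)
  rintro f ⟨g, ⟨⟨F, hFdiff, hFg⟩, M, hM⟩, rfl⟩
  have habsz : ∀ z : 𝔻, ‖(z : ℂ)‖ ≤ 1 := fun z => le_of_lt z.norm_lt_one
  have hdz : ∀ z : 𝔻, 1 - (starRingEnd ℂ) a * (z : ℂ) ≠ 0 :=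
    fun z => denom_ne ha (habsz z)
  refine ⟨fun z => C * g (φ z) / (1 - (starRingEnd ℂ) a * (z : ℂ)) ^ N, ⟨?_, ?_⟩, ?_⟩
  · -- HolOn
    refine ⟨fun z => C * F (η * (a - z) / (1 - (starRingEnd ℂ) a * z))
      / (1 - (starRingEnd ℂ) a * z) ^ N, ?_, ?_⟩
    · have hball : ∀ z ∈ Metric.ball (0:ℂ) 1, 1 - (starRingEnd ℂ) a * z ≠ 0 := by
        intro z hz
        exact denom_ne ha (le_of_lt (by simpa using mem_ball_zero_iff.1 hz))
      have hΦdiff : DifferentiableOn ℂ (fun z => η * (a - z) / (1 - (starRingEnd ℂ) a * z))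
          (Metric.ball (0:ℂ) 1) := by
        apply DifferentiableOn.div
        · exact (differentiable_const η |>.mul ((differentiable_const a).sub differentiable_id)).differentiableOn
        · exact ((differentiable_const (1:ℂ)).sub ((differentiable_const ((starRingEnd ℂ) a)).mul differentiable_id)).differentiableOn
        · exact hball
      have hmaps : Set.MapsTo (fun z => η * (a - z) / (1 - (starRingEnd ℂ) a * z))
          (Metric.ball (0:ℂ) 1) (Metric.ball (0:ℂ) 1) := by
        intro z hz
        have hz1 : ‖z‖ < 1 := by simpa using mem_ball_zero_iff.1 hz
        have := hlink (Complex.UnitDisc.mk z hz1)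
        simp only [Complex.UnitDisc.coe_mk] at this
        rw [mem_ball_zero_iff]
        simp only
        rw [← this]
        simpa using (φ (Complex.UnitDisc.mk z hz1)).norm_lt_one
      refine DifferentiableOn.div ?_ ?_ ?_
      · exact (differentiableOn_const C).mul (hFdiff.comp hΦdiff hmaps)
      · exact (DifferentiableOn.pow (((differentiable_const (1:ℂ)).sub ((differentiable_const ((starRingEnd ℂ) a)).mul differentiable_id)).differentiableOn) N)
      · exact fun z hz => pow_ne_zero _ (hball z hz)
    · intro z
      simp only
      rw [← hlink z, hFg (φ z)]
  · -- bound
    refine ⟨‖C‖ * max M 0 / (1 - ‖a‖) ^ N, fun z => ?_⟩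
    have h1 : ‖(fun z : 𝔻 => C * g (φ z) / (1 - (starRingEnd ℂ) a * (z:ℂ)) ^ N) z‖
        = ‖C‖ * ‖g (φ z)‖ / ‖1 - (starRingEnd ℂ) a * (z:ℂ)‖ ^ N := by
      simp [norm_div, norm_mul, norm_pow]
    rw [h1]
    have hden : (0:ℝ) < (1 - ‖a‖) ^ N := pow_pos (by linarith) N
    have hden2 : (1 - ‖a‖) ^ N ≤ ‖1 - (starRingEnd ℂ) a * (z:ℂ)‖ ^ N :=
      pow_le_pow_left₀ (by linarith) (denom_abs_ge ha (habsz z)) N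
    have hnum : ‖C‖ * ‖g (φ z)‖ ≤ ‖C‖ * max M 0 := by
      apply mul_le_mul_of_nonneg_left _ (norm_nonneg C)
      exact le_max_of_le_left (by simpa using hM (φ z))
    exact div_le_div₀ (mul_nonneg (norm_nonneg C) (le_max_right M 0)) hnum hden hden2
  · -- the equation f ∘ φ = ψ * g'
    funext z
    simp only [Function.comp_apply]
    have h2 : ∏ i, ((↑(φ z) : ℂ) - w i) ^ n i
        = C * (∏ j, ((z:ℂ) - w j) ^ n j) / (1 - (starRingEnd ℂ) a * (z:ℂ)) ^ N := by
      rw [eq_div_iff (pow_ne_zero _ (hdz z))]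
      rw [hlink z]
      exact claim (z:ℂ) (hdz z)
    rw [h2]
    ring


lemma forward {k : ℕ} (w : Fin k → ℂ) (hw : ∀ j, ‖w j‖ = 1)
    (hdist : Function.Injective w) (n : Fin k → ℕ) (hn : ∀ j, 1 ≤ n j)
    (φ : 𝔻 → 𝔻) (a η : ℂ) (ha : ‖a‖ < 1) (hη : ‖η‖ = 1)
    (hlink : ∀ z : 𝔻, (↑(φ z) : ℂ) = η * (a - ↑z) / (1 - (starRingEnd ℂ) a * ↑z))
    (hmaps : ∀ f ∈ psiH (fun z : 𝔻 => ∏ j, ((z : ℂ) - w j) ^ (n j)),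
      f ∘ φ ∈ psiH (fun z : 𝔻 => ∏ j, ((z : ℂ) - w j) ^ (n j))) :
    ∀ j, ∃ i, η * (a - w j) / (1 - (starRingEnd ℂ) a * w j) = w i ∧ n i = n j := by
  classical
  set N := ∑ i, n i with hN
  -- ψ ∈ ψ H^∞
  have hψmem : (fun z : 𝔻 => ∏ j, ((z : ℂ) - w j) ^ (n j))
      ∈ psiH (fun z : 𝔻 => ∏ j, ((z : ℂ) - w j) ^ (n j)) := by
    refine ⟨fun _ => 1, ⟨⟨fun _ => 1, differentiableOn_const 1, fun z => rfl⟩, 1, fun z => by simp⟩, ?_⟩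
    funext z; exact (mul_one _).symm
  obtain ⟨h, ⟨hholh, M, hM⟩, heq⟩ := hmaps _ hψmem
  have heqz : ∀ z : 𝔻, ∏ i, ((↑(φ z) : ℂ) - w i) ^ n i
      = (∏ i, ((z : ℂ) - w i) ^ n i) * h z := fun z => congrFun heq z
  -- the preimage points
  set v : Fin k → ℂ := fun i => (w i - η * a) / (w i * (starRingEnd ℂ) a - η) with hv
  have hcne : ∀ i, w i * (starRingEnd ℂ) a - η ≠ 0 := fun i => coeff_ne ha hη (hw i)
  have hva : ∀ i, ‖v i‖ = 1 := fun i => root_abs ha hη (hw i)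
  have hΦv : ∀ i, η * (a - v i) / (1 - (starRingEnd ℂ) a * v i) = w i :=
    fun i => phi_root ha hη (hw i)
  have hvinj : Function.Injective v := by
    intro i i' hii
    apply hdist
    rw [← hΦv i, ← hΦv i', hii]
  set C : ℂ := ∏ i, (w i * (starRingEnd ℂ) a - η) ^ n i with hC
  have hCpos : 0 < ‖C‖ :=
    norm_pos_iff.2 (Finset.prod_ne_zero_iff.2 fun i _ => pow_ne_zero _ (hcne i))
  obtain ⟨M', hM'⟩ : ∃ x : ℝ, x = max M 0 := ⟨_, rfl⟩
  have hM'0 : 0 ≤ M' := hM' ▸ le_max_right M 0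
  have hM'h : ∀ z : 𝔻, ‖h z‖ ≤ M' :=
    fun z => hM' ▸ le_max_of_le_left (by simpa using hM z)
  -- the key equality and bound on the disc
  have key : ∀ z : 𝔻, ∏ i, ‖(z:ℂ) - v i‖ ^ n i
      ≤ (M' * 2 ^ N / ‖C‖) * ∏ i, ‖(z:ℂ) - w i‖ ^ n i := by
    intro z
    have habsz : ‖(z : ℂ)‖ ≤ 1 := le_of_lt z.norm_lt_one
    have hdz : 1 - (starRingEnd ℂ) a * (z:ℂ) ≠ 0 := denom_ne ha habsz
    have hφz : (↑(φ z) : ℂ) = η * (a - ↑z) / (1 - (starRingEnd ℂ) a * ↑z) := hlink z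
    have h1 : C * ∏ i, ((z:ℂ) - v i) ^ n i
        = (∏ i, ((z : ℂ) - w i) ^ n i) * h z * (1 - (starRingEnd ℂ) a * (z:ℂ)) ^ N := by
      calc C * ∏ i, ((z:ℂ) - v i) ^ n i
          = (∏ i, (η * (a - (z:ℂ)) / (1 - (starRingEnd ℂ) a * (z:ℂ)) - w i) ^ n i)
              * (1 - (starRingEnd ℂ) a * (z:ℂ)) ^ N := (prod_factor w n a η hcne _ hdz).symm
        _ = (∏ i, ((↑(φ z) : ℂ) - w i) ^ n i) * (1 - (starRingEnd ℂ) a * (z:ℂ)) ^ N := by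
              rw [hφz]
        _ = _ := by rw [heqz z]
    have h2 := congrArg norm h1
    simp only [norm_mul, norm_pow, norm_prod] at h2
    -- h2 : |C| * ∏ |z - v i|^{n i} = ∏ |z - w i|^{n i} * |h z| * |1-āz|^N
    have hdle : ‖1 - (starRingEnd ℂ) a * (z:ℂ)‖ ≤ 2 := by
      have h3 : ‖(starRingEnd ℂ) a * (z:ℂ)‖ ≤ 1 := by
        rw [norm_mul, Complex.norm_conj]
        nlinarith [norm_nonneg a, norm_nonneg (z:ℂ)]
      calc ‖1 - (starRingEnd ℂ) a * (z:ℂ)‖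
          ≤ ‖(1:ℂ)‖ + ‖(starRingEnd ℂ) a * (z:ℂ)‖ := norm_sub_le _ _
        _ ≤ 2 := by rw [norm_one]; linarith
    have hPnn : (0:ℝ) ≤ ∏ i, ‖(z:ℂ) - w i‖ ^ n i :=
      Finset.prod_nonneg fun i _ => pow_nonneg (norm_nonneg _) _
    have hQ : ∏ i, ‖(z:ℂ) - v i‖ ^ n i
        = (∏ i, ‖(z:ℂ) - w i‖ ^ n i) * ‖h z‖
            * ‖1 - (starRingEnd ℂ) a * (z:ℂ)‖ ^ N / ‖C‖ := by
      rw [eq_div_iff hCpos.ne']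
      linarith [h2]
    rw [hQ]
    have hnum : (∏ i, ‖(z:ℂ) - w i‖ ^ n i) * ‖h z‖
        * ‖1 - (starRingEnd ℂ) a * (z:ℂ)‖ ^ N
        ≤ (∏ i, ‖(z:ℂ) - w i‖ ^ n i) * M' * 2 ^ N := by
      apply mul_le_mul
      · exact mul_le_mul_of_nonneg_left (hM'h z) hPnn
      · exact pow_le_pow_left₀ (norm_nonneg _) hdle N
      · exact pow_nonneg (norm_nonneg _) _
      · exact mul_nonneg hPnn hM'0
    calc (∏ i, ‖(z:ℂ) - w i‖ ^ n i) * ‖h z‖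
            * ‖1 - (starRingEnd ℂ) a * (z:ℂ)‖ ^ N / ‖C‖
        ≤ (∏ i, ‖(z:ℂ) - w i‖ ^ n i) * M' * 2 ^ N / ‖C‖ :=
          div_le_div₀ (mul_nonneg (mul_nonneg hPnn hM'0) (by positivity)) hnum hCpos le_rfl
      _ = (M' * 2 ^ N / ‖C‖) * ∏ i, ‖(z:ℂ) - w i‖ ^ n i := by ring
  obtain ⟨K2, hK2def⟩ : ∃ x : ℝ, x = M' * 2 ^ N * 2 ^ N / ‖C‖ := ⟨_, rfl⟩
  have hK2 : 0 ≤ K2 := by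
    rw [hK2def]
    exact div_nonneg (mul_nonneg (mul_nonneg hM'0 (by positivity)) (by positivity)) hCpos.le
  -- radial estimate
  have keyper : ∀ (j : Fin k) (r : ℝ), 0 ≤ r → r < 1 →
      ∏ i, ‖(↑r * w j : ℂ) - v i‖ ^ n i ≤ K2 * (1 - r) ^ n j := by
    intro j r hr0 hr1
    have habs : ‖(r:ℂ) * w j‖ < 1 := by
      rw [norm_mul, Complex.norm_real, Real.norm_eq_abs, hw j, mul_one, _root_.abs_of_nonneg hr0]; exact hr1
    have hkey := key (Complex.UnitDisc.mk _ habs)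
    simp only [Complex.UnitDisc.coe_mk] at hkey
    refine hkey.trans ?_
    have hsplit : ∏ i, ‖(↑r * w j : ℂ) - w i‖ ^ n i
        = ‖(↑r * w j : ℂ) - w j‖ ^ n j
          * ∏ i ∈ Finset.univ.erase j, ‖(↑r * w j : ℂ) - w i‖ ^ n i :=
      (Finset.mul_prod_erase Finset.univ _ (Finset.mem_univ j)).symm
    have hwj : ‖(↑r * w j : ℂ) - w j‖ = 1 - r := by
      have he : (↑r * w j : ℂ) - w j = ((r - 1 : ℝ) : ℂ) * w j := by push_cast; ring
      rw [he, norm_mul, Complex.norm_real, Real.norm_eq_abs, hw j, mul_one, _root_.abs_of_nonpos (by linarith)]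
      ring
    have herase : ∏ i ∈ Finset.univ.erase j, ‖(↑r * w j : ℂ) - w i‖ ^ n i
        ≤ 2 ^ N := by
      calc ∏ i ∈ Finset.univ.erase j, ‖(↑r * w j : ℂ) - w i‖ ^ n i
          ≤ ∏ i ∈ Finset.univ.erase j, (2:ℝ) ^ n i := by
            apply Finset.prod_le_prod
            · exact fun i _ => pow_nonneg (norm_nonneg _) _
            · intro i _
              apply pow_le_pow_left₀ (norm_nonneg _)
              calc ‖(↑r * w j : ℂ) - w i‖
                  ≤ ‖(↑r * w j : ℂ)‖ + ‖w i‖ := norm_sub_le _ _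
                _ ≤ 2 := by
                    rw [norm_mul, Complex.norm_real, Real.norm_eq_abs, hw j, hw i, mul_one, _root_.abs_of_nonneg hr0]
                    linarith
        _ = 2 ^ (∑ i ∈ Finset.univ.erase j, n i) := Finset.prod_pow_eq_pow_sum _ _ _
        _ ≤ 2 ^ N := by
            apply pow_le_pow_right₀ (by norm_num)
            exact Finset.sum_le_sum_of_subset (Finset.subset_univ _)
    have h10 : (M' * 2 ^ N / ‖C‖) * ∏ i, ‖(↑r * w j : ℂ) - w i‖ ^ n i
        ≤ (M' * 2 ^ N / ‖C‖) * ((1 - r) ^ n j * 2 ^ N) := by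
      apply mul_le_mul_of_nonneg_left _
        (div_nonneg (mul_nonneg hM'0 (by positivity)) hCpos.le)
      rw [hsplit, hwj]
      exact mul_le_mul_of_nonneg_left herase (pow_nonneg (by linarith) _)
    refine h10.trans (le_of_eq ?_)
    rw [hK2def]; ring
  -- per-index extraction
  have main : ∀ j : Fin k, ∃ i, v i = w j ∧ n j ≤ n i := by
    intro j
    -- Step A: some v i equals w j
    have hstepA : ∃ i, v i = w j := by
      by_contra hcon
      push_neg at hcon
      obtain ⟨t, htdef⟩ : ∃ x : ℝ, x = Finset.univ.inf' (Finset.univ_nonempty_iff.2 ⟨j⟩)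
        (fun i => min (‖w j - v i‖ / 2) 1) := ⟨_, rfl⟩
      have ht0 : 0 < t := by
        rw [htdef, Finset.lt_inf'_iff]
        intro i _
        have : v i ≠ w j := hcon i
        have h11 : w j - v i ≠ 0 := sub_ne_zero.2 (Ne.symm this)
        have := norm_pos_iff.2 h11
        exact lt_min (by linarith) one_pos
      have ht1 : t ≤ 1 := htdef ▸ le_trans (Finset.inf'_le _ (Finset.mem_univ j)) (min_le_right _ _)
      obtain ⟨ε, hεdef⟩ : ∃ x : ℝ, x = min (t / 2) (t ^ N / (2 * (K2 + 1))) := ⟨_, rfl⟩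
      have hε0 : 0 < ε := hεdef ▸ lt_min (by linarith) (div_pos (pow_pos ht0 N) (by linarith))
      have hεt : ε ≤ t / 2 := hεdef ▸ min_le_left _ _
      have hr0 : (0:ℝ) ≤ 1 - ε := by linarith
      have hr1 : 1 - ε < 1 := by linarith
      have hlow : ∀ i, t ≤ ‖(↑(1 - ε) * w j : ℂ) - v i‖ := by
        intro i
        have htri : ‖w j - v i‖
            ≤ ‖w j - ↑(1 - ε) * w j‖ + ‖(↑(1 - ε) * w j : ℂ) - v i‖ :=
          norm_sub_le_norm_sub_add_norm_sub _ _ _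
        have he : w j - (↑(1 - ε) : ℂ) * w j = ((ε : ℝ) : ℂ) * w j := by push_cast; ring
        rw [he, norm_mul, Complex.norm_real, Real.norm_eq_abs, hw j, mul_one, _root_.abs_of_nonneg hε0.le] at htri
        have hfi : t ≤ min (‖w j - v i‖ / 2) 1 :=
          htdef ▸ Finset.inf'_le _ (Finset.mem_univ i)
        have : t ≤ ‖w j - v i‖ / 2 := le_trans hfi (min_le_left _ _)
        linarith
      have hprod : t ^ N ≤ ∏ i, ‖(↑(1 - ε) * w j : ℂ) - v i‖ ^ n i := by
        calc (t:ℝ) ^ N = ∏ i, t ^ n i := (Finset.prod_pow_eq_pow_sum _ _ _).symm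
          _ ≤ _ := by
            apply Finset.prod_le_prod
            · exact fun i _ => pow_nonneg ht0.le _
            · exact fun i _ => pow_le_pow_left₀ ht0.le (hlow i) _
      have hup := keyper j (1 - ε) hr0 hr1
      have hfin : t ^ N ≤ K2 * ε := by
        have h12 : (1 - (1 - ε)) = ε := by ring
        rw [h12] at hup
        have h13 : (ε:ℝ) ^ n j ≤ ε ^ 1 := by
          apply pow_le_pow_of_le_one hε0.le (by linarith) (hn j)
        rw [pow_one] at h13
        have := hprod.trans hup
        nlinarith
      rw [hεdef] at hfin
      exact eps_contra ht0 hK2 hfin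
    obtain ⟨i0, hi0⟩ := hstepA
    refine ⟨i0, hi0, ?_⟩
    -- Step B: n j ≤ n i0
    by_contra hni
    push_neg at hni
    obtain ⟨t, htdef⟩ : ∃ x : ℝ, x = Finset.univ.inf' (Finset.univ_nonempty_iff.2 ⟨j⟩)
      (fun i => if i = i0 then 1 else min (‖w j - v i‖ / 2) 1) := ⟨_, rfl⟩
    have ht0 : 0 < t := by
      rw [htdef, Finset.lt_inf'_iff]
      intro i _
      by_cases hii : i = i0
      · simp [hii]
      · simp only [hii, if_false]
        have : v i ≠ w j := by
          intro hvi
          exact hii (hvinj (hvi.trans hi0.symm))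
        have h11 : w j - v i ≠ 0 := sub_ne_zero.2 (Ne.symm this)
        have := norm_pos_iff.2 h11
        exact lt_min (by linarith) one_pos
    have ht1 : t ≤ 1 := by
      rw [htdef]
      refine le_trans (Finset.inf'_le _ (Finset.mem_univ i0)) ?_
      simp
    obtain ⟨ε, hεdef⟩ : ∃ x : ℝ, x = min (t / 2) (t ^ N / (2 * (K2 + 1))) := ⟨_, rfl⟩
    have hε0 : 0 < ε := hεdef ▸ lt_min (by linarith) (div_pos (pow_pos ht0 N) (by linarith))
    have hεt : ε ≤ t / 2 := hεdef ▸ min_le_left _ _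
    have hr0 : (0:ℝ) ≤ 1 - ε := by linarith
    have hr1 : 1 - ε < 1 := by linarith
    have hwj1 : ‖(↑(1 - ε) * w j : ℂ) - v i0‖ = ε := by
      rw [hi0]
      have he : (↑(1 - ε) : ℂ) * w j - w j = ((-ε : ℝ) : ℂ) * w j := by push_cast; ring
      rw [he, norm_mul, Complex.norm_real, Real.norm_eq_abs, hw j, mul_one, _root_.abs_of_nonpos (by linarith)]
      ring
    have hlow : ∀ i, i ≠ i0 → t ≤ ‖(↑(1 - ε) * w j : ℂ) - v i‖ := by
      intro i hii
      have htri : ‖w j - v i‖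
          ≤ ‖w j - ↑(1 - ε) * w j‖ + ‖(↑(1 - ε) * w j : ℂ) - v i‖ :=
        norm_sub_le_norm_sub_add_norm_sub _ _ _
      have he : w j - (↑(1 - ε) : ℂ) * w j = ((ε : ℝ) : ℂ) * w j := by push_cast; ring
      rw [he, norm_mul, Complex.norm_real, Real.norm_eq_abs, hw j, mul_one, _root_.abs_of_nonneg hε0.le] at htri
      have hfi : t ≤ min (‖w j - v i‖ / 2) 1 := by
        rw [htdef]
        have h20 := Finset.inf'_le (f := fun i => if i = i0 then (1:ℝ) else min (‖w j - v i‖ / 2) 1) (Finset.mem_univ i)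
        rwa [if_neg hii] at h20
      have : t ≤ ‖w j - v i‖ / 2 := le_trans hfi (min_le_left _ _)
      linarith
    have hprod : ε ^ n i0 * t ^ N ≤ ∏ i, ‖(↑(1 - ε) * w j : ℂ) - v i‖ ^ n i := by
      rw [← Finset.mul_prod_erase Finset.univ _ (Finset.mem_univ i0), hwj1]
      apply mul_le_mul_of_nonneg_left _ (pow_nonneg hε0.le _)
      calc (t:ℝ) ^ N ≤ t ^ (∑ i ∈ Finset.univ.erase i0, n i) := by
            apply pow_le_pow_of_le_one ht0.le ht1
            exact Finset.sum_le_sum_of_subset (Finset.subset_univ _)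
        _ = ∏ i ∈ Finset.univ.erase i0, t ^ n i := (Finset.prod_pow_eq_pow_sum _ _ _).symm
        _ ≤ _ := by
            apply Finset.prod_le_prod
            · exact fun i _ => pow_nonneg ht0.le _
            · exact fun i hi => pow_le_pow_left₀ ht0.le (hlow i (Finset.ne_of_mem_erase hi)) _
    have hup := keyper j (1 - ε) hr0 hr1
    have h12 : (1 - (1 - ε)) = ε := by ring
    rw [h12] at hup
    have h13 : (ε:ℝ) ^ n j ≤ ε ^ (n i0 + 1) :=
      pow_le_pow_of_le_one hε0.le (by linarith) hni
    have hfin : ε ^ n i0 * t ^ N ≤ K2 * (ε ^ n i0 * ε) := by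
      have := hprod.trans (hup.trans (mul_le_mul_of_nonneg_left h13 hK2))
      calc ε ^ n i0 * t ^ N ≤ K2 * ε ^ (n i0 + 1) := this
        _ = K2 * (ε ^ n i0 * ε) := by ring
    have hεpow : 0 < ε ^ n i0 := pow_pos hε0 _
    have hfin2 : t ^ N ≤ K2 * ε := by
      have h14 : ε ^ n i0 * t ^ N ≤ ε ^ n i0 * (K2 * ε) := by
        calc ε ^ n i0 * t ^ N ≤ K2 * (ε ^ n i0 * ε) := hfin
          _ = ε ^ n i0 * (K2 * ε) := by ring
      exact le_of_mul_le_mul_left h14 hεpow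
    rw [hεdef] at hfin2
    exact eps_contra ht0 hK2 hfin2
  -- assemble
  choose ι hι1 hι2 using main
  have hιinj : Function.Injective ι := by
    intro j j' hjj
    apply hdist
    rw [← hι1 j, ← hι1 j', hjj]
  have hιbij : Function.Bijective ι := Finite.injective_iff_bijective.1 hιinj
  have hsum : ∑ j, n (ι j) = ∑ j, n j := hιbij.sum_comp n
  have hneq : ∀ j, n j = n (ι j) := by
    intro j
    have := (Finset.sum_eq_sum_iff_of_le (f := n) (g := fun j => n (ι j))
      (fun i _ => hι2 i)).1 hsum.symm
    exact this j (Finset.mem_univ j)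
  intro j
  refine ⟨ι j, ?_, (hneq j).symm⟩
  rw [← hι1 j]
  exact hΦv (ι j)


lemma exists_self_map (f : ℂ → ℂ)
    (hf : ∀ c : ℂ, ‖c‖ < 1 → ‖f c‖ < 1) :
    ∃ φ' : 𝔻 → 𝔻, ∀ z : 𝔻, (↑(φ' z) : ℂ) = f ↑z :=
  ⟨fun z => Complex.UnitDisc.mk (f ↑z) (hf _ z.norm_lt_one), fun _ => rfl⟩

end Stmt15Aux

/-- for `ψ(z) = (z - w₁)^{n₁} ⋯ (z - w_k)^{n_k}` with distinct unimodular
`w_j` and `φ ∈ Aut(𝔻)` with Möbius extension `Φ`, the composition operator `C_φ` is a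
well-defined algebra automorphism of `ψ H^∞` iff `mult_ψ (Φ w_j) = mult_ψ (w_j)` for all
`j`, i.e. each `Φ w_j` is some `w_i` with `n_i = n_j`. -/
theorem stmt_15 (k : ℕ) (hk : 1 ≤ k) (w : Fin k → ℂ) (hw : ∀ j, ‖w j‖ = 1)
    (hdist : Function.Injective w) (n : Fin k → ℕ) (hn : ∀ j, 1 ≤ n j)
    (φ : 𝔻 → 𝔻) (Φ : ℂ → ℂ) (hmob : IsMobius Φ)
    (hlink : ∀ z : 𝔻, (↑(φ z) : ℂ) = Φ ↑z) :
    CompAutOn (psiH (fun z : 𝔻 => ∏ j, ((z : ℂ) - w j) ^ (n j))) φ ↔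
      ∀ j, ∃ i, Φ (w j) = w i ∧ n i = n j := by
  obtain ⟨a, η, ha, hη, hΦ⟩ := hmob
  have hlink' : ∀ z : 𝔻, (↑(φ z) : ℂ) = η * (a - ↑z) / (1 - (starRingEnd ℂ) a * ↑z) :=
    fun z => (hlink z).trans (hΦ _)
  constructor
  · intro hCA j
    obtain ⟨i, hi1, hi2⟩ :=
      Stmt15Aux.forward w hw hdist n hn φ a η ha hη hlink' hCA.1 j
    exact ⟨i, by rw [hΦ]; exact hi1, hi2⟩
  · intro hcond
    have hcond' : ∀ j, ∃ i,
        η * (a - w j) / (1 - (starRingEnd ℂ) a * w j) = w i ∧ n i = n j := by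
      intro j
      obtain ⟨i, h1, h2⟩ := hcond j
      exact ⟨i, by rw [← hΦ]; exact h1, h2⟩
    choose σ hσ1 hσ2 using hcond'
    have hσinj : Function.Injective σ := by
      intro j j' hjj
      apply hdist
      apply Stmt15Aux.mobius_inj ha hη (le_of_eq (hw j)) (le_of_eq (hw j'))
      rw [hσ1 j, hσ1 j', hjj]
    have hσbij : Function.Bijective σ := Finite.injective_iff_bijective.1 hσinj
    have ha' : ‖η * a‖ < 1 := by rw [norm_mul, hη, one_mul]; exact ha
    have hη' : ‖(starRingEnd ℂ) η‖ = 1 := by rw [Complex.norm_conj]; exact hη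
    obtain ⟨φ', hlinkΨ0⟩ := Stmt15Aux.exists_self_map
      (fun c => (starRingEnd ℂ) η * (η * a - c) / (1 - (starRingEnd ℂ) (η * a) * c))
      (fun c hc => Stmt15Aux.mobius_abs_lt ha' hη' hc)
    have hlinkΨ : ∀ z : 𝔻, (↑(φ' z) : ℂ)
        = (starRingEnd ℂ) η * (η * a - ↑z) / (1 - (starRingEnd ℂ) (η * a) * ↑z) := hlinkΨ0
    have hid1 : ∀ z : 𝔻, φ (φ' z) = z := by
      intro z
      apply Complex.UnitDisc.coe_injective
      rw [hlink' (φ' z), hlinkΨ z]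
      exact Stmt15Aux.phi_psi ha hη (le_of_lt z.norm_lt_one)
        (le_of_lt (Stmt15Aux.mobius_abs_lt ha' hη' z.norm_lt_one))
    have hid2 : ∀ z : 𝔻, φ' (φ z) = z := by
      intro z
      apply Complex.UnitDisc.coe_injective
      apply Stmt15Aux.mobius_inj ha hη (le_of_lt (φ' (φ z)).norm_lt_one)
        (le_of_lt z.norm_lt_one)
      rw [hlinkΨ (φ z)]
      rw [Stmt15Aux.phi_psi ha hη (le_of_lt (φ z).norm_lt_one)
        (le_of_lt (Stmt15Aux.mobius_abs_lt ha' hη' (φ z).norm_lt_one))]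
      exact hlink' z
    refine ⟨Stmt15Aux.mapsInto w hw n φ a η ha hη hlink' σ hσbij hσ1 hσ2, ?_, ?_⟩
    · intro f hf f' hf' hff
      funext u
      have h1 := congrFun hff (φ' u)
      simp only [Function.comp_apply, hid1 u] at h1
      exact h1
    · intro f hf
      have hσ'σ : ∀ j, σ ((Equiv.ofBijective σ hσbij).symm j) = j :=
        fun j => (Equiv.ofBijective σ hσbij).apply_symm_apply j
      have hΨσ : ∀ j, (starRingEnd ℂ) η * (η * a - w j) / (1 - (starRingEnd ℂ) (η * a) * w j)
          = w ((Equiv.ofBijective σ hσbij).symm j) := by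
        intro j
        apply Stmt15Aux.mobius_inj ha hη
          (Stmt15Aux.mobius_abs_le ha' hη' (le_of_eq (hw j)))
          (le_of_eq (hw ((Equiv.ofBijective σ hσbij).symm j)))
        rw [Stmt15Aux.phi_psi ha hη (le_of_eq (hw j))
          (Stmt15Aux.mobius_abs_le ha' hη' (le_of_eq (hw j)))]
        rw [hσ1 ((Equiv.ofBijective σ hσbij).symm j), hσ'σ j]
      have hnσ' : ∀ j, n ((Equiv.ofBijective σ hσbij).symm j) = n j := by
        intro j
        have h2 := hσ2 ((Equiv.ofBijective σ hσbij).symm j)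
        rw [hσ'σ j] at h2
        exact h2.symm
      have hmem := Stmt15Aux.mapsInto w hw n φ' (η * a) ((starRingEnd ℂ) η) ha' hη' hlinkΨ
        (fun j => (Equiv.ofBijective σ hσbij).symm j)
        (Equiv.ofBijective σ hσbij).symm.bijective hΨσ hnσ' f hf
      refine ⟨f ∘ φ', hmem, ?_⟩
      funext z
      simp only [Function.comp_apply, hid2 z]
end
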